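/- arXiv:1905.07983 — 4 statements merged into one kernel-verified Lean document; each statement's English description precedes it below -/
import Mathlib

section
/- Let N ≥ 1, a ≥ 0, b > 0, and set α = a+b−1 and β = b−1 (so α, β > −1). Then the function φ(x) = Π_{1≤i<j≤N}(x_j−x_i) · Π_{j=1}^N (1−x_j)^{(a+b)/2}(1+x_j)^{b/2} attains a unique maximum on the alcove A = {x ∈ ℝ^N : −1 ≤ x_1 ≤ ... ≤ x_N ≤ 1} at the point z = (z_1,...,z_N), where z_1 < ... < z_N are the ordered zeros of the Jacobi polynomial P_N^{(α,β)}. -/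
open MeasureTheory Filter Real Finset Topology Set

lemma integrableOn_weight {α β : ℝ} (hα : -1 < α) (hβ : -1 < β) :
    IntegrableOn (fun x : ℝ => (1 - x) ^ α * (1 + x) ^ β) (Set.Ioo (-1) 1) := by
  have h1 : IntervalIntegrable (fun x : ℝ => (1 - x) ^ α) volume (-1) 1 := by
    have := (intervalIntegral.intervalIntegrable_rpow' hα (a := 0) (b := 2)).comp_sub_left 1
    norm_num at this
    exact this.symm
  have h2 : IntervalIntegrable (fun x : ℝ => (1 + x) ^ β) volume (-1) 1 := by
    have := (intervalIntegral.intervalIntegrable_rpow' hβ (a := 0) (b := 2)).comp_add_right 1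
    norm_num at this
    simpa [add_comm] using this
  have h1' : IntegrableOn (fun x : ℝ => (1 - x) ^ α) (Set.Ioo (-1) 1) :=
    (intervalIntegrable_iff_integrableOn_Ioo_of_le (by norm_num)).1 h1
  have h2' : IntegrableOn (fun x : ℝ => (1 + x) ^ β) (Set.Ioo (-1) 1) :=
    (intervalIntegrable_iff_integrableOn_Ioo_of_le (by norm_num)).1 h2
  have hmeas : ∀ s : Set ℝ, s ⊆ Set.Ioo (-1) 1 → MeasurableSet s →
      AEStronglyMeasurable (fun x : ℝ => (1 - x) ^ α * (1 + x) ^ β) (volume.restrict s) := by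
    intro s hs hms
    refine ContinuousOn.aestronglyMeasurable ?_ hms
    apply ContinuousOn.mul
    · exact (continuousOn_const.sub continuousOn_id).rpow_const
        (fun x hx => Or.inl (by simp only [Pi.sub_apply, id_eq]; have := (hs hx).2; intro h; nlinarith))
    · exact (continuousOn_const.add continuousOn_id).rpow_const
        (fun x hx => Or.inl (by simp only [Pi.add_apply, id_eq]; have := (hs hx).1; intro h; nlinarith))
  have key : ∀ s : Set ℝ, s = Set.Ioo (-1:ℝ) 0 ∨ s = Set.Ico (0:ℝ) 1 →
      IntegrableOn (fun x : ℝ => (1 - x) ^ α * (1 + x) ^ β) s := by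
    rintro s (rfl | rfl)
    · refine Integrable.mono' ((h2'.mono_set (Set.Ioo_subset_Ioo le_rfl (by norm_num))).const_mul
        (max (2 ^ α) 1)) (hmeas _ (Set.Ioo_subset_Ioo le_rfl (by norm_num)) measurableSet_Ioo) ?_
      filter_upwards [ae_restrict_mem measurableSet_Ioo] with x hx
      have hx1 : (0:ℝ) < 1 + x := by linarith [hx.1]
      have hx2 : (1:ℝ) ≤ 1 - x := by linarith [hx.2]
      rw [Real.norm_eq_abs, abs_mul, abs_of_nonneg (Real.rpow_nonneg (by linarith) _),
        abs_of_nonneg (Real.rpow_nonneg hx1.le _)]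
      refine mul_le_mul_of_nonneg_right ?_ (Real.rpow_nonneg hx1.le _)
      rcases le_or_gt 0 α with h' | h'
      · exact le_max_of_le_left (Real.rpow_le_rpow (by linarith) (by linarith [hx.1]) h')
      · exact le_max_of_le_right (Real.rpow_le_one_of_one_le_of_nonpos hx2 h'.le)
    · refine Integrable.mono' ((h1'.mono_set (fun x hx => ⟨lt_of_lt_of_le (by norm_num) hx.1, hx.2⟩)).const_mul
        (max (2 ^ β) 1)) (hmeas _ (fun x hx => ⟨by linarith [hx.1], hx.2⟩) measurableSet_Ico) ?_
      filter_upwards [ae_restrict_mem measurableSet_Ico] with x hx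
      have hx1 : (0:ℝ) < 1 - x := by linarith [hx.2]
      have hx2 : (1:ℝ) ≤ 1 + x := by linarith [hx.1]
      rw [Real.norm_eq_abs, abs_mul, abs_of_nonneg (Real.rpow_nonneg hx1.le _),
        abs_of_nonneg (Real.rpow_nonneg (by linarith) _), mul_comm (max _ _)]
      refine mul_le_mul_of_nonneg_left ?_ (Real.rpow_nonneg hx1.le _)
      rcases le_or_gt 0 β with h' | h'
      · exact le_max_of_le_left (Real.rpow_le_rpow (by linarith) (by linarith [hx.2]) h')
      · exact le_max_of_le_right (Real.rpow_le_one_of_one_le_of_nonpos hx2 h'.le)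
  have := (key _ (Or.inl rfl)).union (key _ (Or.inr rfl))
  rwa [Set.Ioo_union_Ico_eq_Ioo (by norm_num) (by norm_num)] at this

lemma integrableOn_cont_mul_weight {α β : ℝ} (hα : -1 < α) (hβ : -1 < β)
    {f : ℝ → ℝ} (hf : Continuous f) :
    IntegrableOn (fun x : ℝ => f x * ((1 - x) ^ α * (1 + x) ^ β)) (Set.Ioo (-1) 1) := by
  obtain ⟨C, hC⟩ := (isCompact_Icc (a := (-1:ℝ)) (b := 1)).exists_bound_of_continuousOn
    hf.continuousOn
  refine Integrable.mono' ((integrableOn_weight hα hβ).const_mul C)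
    (hf.aestronglyMeasurable.mul ?_) ?_
  · refine ContinuousOn.aestronglyMeasurable ?_ measurableSet_Ioo
    apply ContinuousOn.mul
    · exact (continuousOn_const.sub continuousOn_id).rpow_const
        (fun x hx => Or.inl (by simp only [Pi.sub_apply, id_eq]; have := hx.2; intro h; nlinarith))
    · exact (continuousOn_const.add continuousOn_id).rpow_const
        (fun x hx => Or.inl (by simp only [Pi.add_apply, id_eq]; have := hx.1; intro h; nlinarith))
  · filter_upwards [ae_restrict_mem measurableSet_Ioo] with x hx
    have h1 : (0:ℝ) ≤ 1 - x := by linarith [hx.2]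
    have h2 : (0:ℝ) ≤ 1 + x := by linarith [hx.1]
    have hw : 0 ≤ (1 - x) ^ α * (1 + x) ^ β :=
      mul_nonneg (Real.rpow_nonneg h1 _) (Real.rpow_nonneg h2 _)
    rw [Real.norm_eq_abs, abs_mul, abs_of_nonneg hw]
    exact mul_le_mul_of_nonneg_right (hC x ⟨hx.1.le, hx.2.le⟩) hw

open Polynomial

noncomputable def Lop (α β : ℝ) (R : Polynomial ℝ) : Polynomial ℝ :=
  (1 - Polynomial.X ^ 2) * (derivative (derivative R)) +
    (Polynomial.C (β - α) - Polynomial.C (α + β + 2) * Polynomial.X) * derivative R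

lemma Lop_natDegree_le (α β : ℝ) (R : Polynomial ℝ) :
    (Lop α β R).natDegree ≤ R.natDegree := by
  by_cases hR' : derivative R = 0
  · simp [Lop, hR']
  have hRdeg : R.natDegree ≠ 0 := fun h => hR' (by
    rcases Polynomial.natDegree_eq_zero.mp h with ⟨c, rfl⟩; simp)
  have h1 : (derivative R).natDegree < R.natDegree := Polynomial.natDegree_derivative_lt hRdeg
  have hlin : ((Polynomial.C (β - α) - Polynomial.C (α + β + 2) * Polynomial.X) *
      derivative R).natDegree ≤ R.natDegree := by
    refine (Polynomial.natDegree_mul_le).trans ?_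
    have : (Polynomial.C (β - α) - Polynomial.C (α + β + 2) * Polynomial.X).natDegree ≤ 1 := by
      refine (Polynomial.natDegree_sub_le _ _).trans ?_
      refine max_le (by simp) ((Polynomial.natDegree_C_mul_le _ _).trans (by simp))
    omega
  refine (Polynomial.natDegree_add_le _ _).trans (max_le ?_ hlin)
  by_cases hR'' : derivative (derivative R) = 0
  · simp [hR'']
  have hR'deg : (derivative R).natDegree ≠ 0 := fun h => hR'' (by
    rcases Polynomial.natDegree_eq_zero.mp h with ⟨c, hc⟩; rw [← hc]; simp)
  have h2 : (derivative (derivative R)).natDegree < (derivative R).natDegree :=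
    Polynomial.natDegree_derivative_lt hR'deg
  refine (Polynomial.natDegree_mul_le).trans ?_
  have : (1 - Polynomial.X ^ 2 : ℝ[X]).natDegree ≤ 2 := by
    refine (Polynomial.natDegree_sub_le _ _).trans ?_
    simp [Polynomial.natDegree_X_pow]
  omega

lemma ibp_core {α β : ℝ} (hα : -1 < α) (hβ : -1 < β) (R Q : Polynomial ℝ) :
    ∫ x in Set.Ioo (-1:ℝ) 1, (Lop α β R).eval x * Q.eval x * ((1-x)^α * (1+x)^β)
      = - ∫ x in Set.Ioo (-1:ℝ) 1,
          (derivative R).eval x * (derivative Q).eval x * ((1-x)^(α+1) * (1+x)^(β+1)) := by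
  set f : ℝ → ℝ := fun y => (1-y)^(α+1) * ((1+y)^(β+1) * ((derivative R).eval y * Q.eval y))
    with hf
  set g : ℝ → ℝ := fun y => (Lop α β R).eval y * Q.eval y * ((1-y)^α * (1+y)^β)
    + (derivative R).eval y * (derivative Q).eval y * ((1-y)^(α+1) * (1+y)^(β+1)) with hg
  have hαβ1 : (-1:ℝ) < α + 1 := by linarith
  have hβ1 : (-1:ℝ) < β + 1 := by linarith
  -- integrability
  have hint1 : IntegrableOn (fun x => (Lop α β R).eval x * Q.eval x * ((1-x)^α * (1+x)^β))
      (Set.Ioo (-1:ℝ) 1) := by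
    have := integrableOn_cont_mul_weight hα hβ
      (f := fun x => (Lop α β R).eval x * Q.eval x) (by fun_prop)
    exact this
  have hint2 : IntegrableOn
      (fun x => (derivative R).eval x * (derivative Q).eval x * ((1-x)^(α+1) * (1+x)^(β+1)))
      (Set.Ioo (-1:ℝ) 1) := by
    have := integrableOn_cont_mul_weight hαβ1 hβ1
      (f := fun x => (derivative R).eval x * (derivative Q).eval x) (by fun_prop)
    exact this
  have hintg : IntegrableOn g (Set.Ioo (-1:ℝ) 1) := hint1.add hint2
  -- derivative
  have hderiv : ∀ x ∈ Set.Ioo (-1:ℝ) 1, HasDerivAt f (g x) x := by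
    intro x hx
    have h1x : (0:ℝ) < 1 - x := by linarith [hx.2]
    have h2x : (0:ℝ) < 1 + x := by linarith [hx.1]
    have hu1 : HasDerivAt (fun y : ℝ => (1-y)^(α+1)) ((-1) * ((α+1) * (1-x)^(α+1-1))) x := by
      have hb : HasDerivAt (fun y : ℝ => 1 - y) (-1) x := by
        simpa using (hasDerivAt_id x).const_sub 1
      have := HasDerivAt.rpow_const (p := α+1) hb (Or.inl h1x.ne')
      convert this using 1; ring
    have hu2 : HasDerivAt (fun y : ℝ => (1+y)^(β+1)) ((1) * ((β+1) * (1+x)^(β+1-1))) x := by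
      have hb : HasDerivAt (fun y : ℝ => 1 + y) (1) x := by
        simpa using (hasDerivAt_id x).const_add 1
      have := HasDerivAt.rpow_const (p := β+1) hb (Or.inl h2x.ne')
      convert this using 1; ring
    have hp : HasDerivAt (fun y : ℝ => (derivative R).eval y * Q.eval y)
        ((derivative (derivative R)).eval x * Q.eval x
          + (derivative R).eval x * (derivative Q).eval x) x :=
      (Polynomial.hasDerivAt (derivative R) x).mul (Polynomial.hasDerivAt Q x)
    have := hu1.mul (hu2.mul hp)
    convert this using 1
    · rfl
    · rfl
    · rfl
    have e1 : (1-x)^(α+1) = (1-x)^α * (1-x) := by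
      rw [Real.rpow_add h1x, Real.rpow_one]
    have e2 : (1+x)^(β+1) = (1+x)^β * (1+x) := by
      rw [Real.rpow_add h2x, Real.rpow_one]
    have e3 : (α+1-1) = α := by ring
    have e4 : (β+1-1) = β := by ring
    rw [hg]
    simp only [Lop, e3, e4, Pi.mul_apply, Polynomial.eval_add, Polynomial.eval_mul, Polynomial.eval_sub,
      Polynomial.eval_one, Polynomial.eval_pow, Polynomial.eval_X, Polynomial.eval_C]
    rw [e1, e2]
    ring
  -- boundary limits
  have hT1 : Tendsto f (𝓝[<] (1:ℝ)) (𝓝 0) := by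
    have hb : Tendsto (fun y : ℝ => 1 - y) (𝓝[<] (1:ℝ)) (𝓝 0) := by
      have : Tendsto (fun y : ℝ => 1 - y) (𝓝 (1:ℝ)) (𝓝 0) := by
        have : Tendsto (fun y : ℝ => 1 - y) (𝓝 (1:ℝ)) (𝓝 (1-1)) :=
          Continuous.tendsto (by fun_prop) 1
        simpa using this
      exact this.mono_left nhdsWithin_le_nhds
    have h0 : ContinuousAt (fun t : ℝ => t ^ (α+1)) 0 :=
      Real.continuousAt_rpow_const 0 (α+1) (Or.inr (by linarith))
    have hu1 : Tendsto (fun y : ℝ => (1-y)^(α+1)) (𝓝[<] (1:ℝ)) (𝓝 0) := by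
      have := h0.tendsto.comp hb
      rwa [Real.zero_rpow (by linarith : α + 1 ≠ 0)] at this
    have hrest : Tendsto (fun y : ℝ => (1+y)^(β+1) * ((derivative R).eval y * Q.eval y))
        (𝓝[<] (1:ℝ)) (𝓝 ((1+(1:ℝ))^(β+1) * ((derivative R).eval 1 * Q.eval 1))) := by
      refine Tendsto.mono_left ?_ nhdsWithin_le_nhds
      exact (ContinuousAt.rpow_const (by fun_prop) (Or.inl (by norm_num))).mul (by fun_prop)
    have := hu1.mul hrest
    rwa [zero_mul] at this
  have hT2 : Tendsto f (𝓝[>] (-1:ℝ)) (𝓝 0) := by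
    have hb : Tendsto (fun y : ℝ => 1 + y) (𝓝[>] (-1:ℝ)) (𝓝 0) := by
      have : Tendsto (fun y : ℝ => 1 + y) (𝓝 (-1:ℝ)) (𝓝 0) := by
        have : Tendsto (fun y : ℝ => 1 + y) (𝓝 (-1:ℝ)) (𝓝 (1 + -1)) :=
          Continuous.tendsto (by fun_prop) (-1)
        simpa using this
      exact this.mono_left nhdsWithin_le_nhds
    have h0 : ContinuousAt (fun t : ℝ => t ^ (β+1)) 0 :=
      Real.continuousAt_rpow_const 0 (β+1) (Or.inr (by linarith))
    have hu2 : Tendsto (fun y : ℝ => (1+y)^(β+1)) (𝓝[>] (-1:ℝ)) (𝓝 0) := by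
      have := h0.tendsto.comp hb
      rwa [Real.zero_rpow (by linarith : β + 1 ≠ 0)] at this
    have hu1 : Tendsto (fun y : ℝ => (1-y)^(α+1)) (𝓝[>] (-1:ℝ)) (𝓝 ((1-(-1:ℝ))^(α+1))) := by
      refine Tendsto.mono_left ?_ nhdsWithin_le_nhds
      exact ContinuousAt.rpow_const (by fun_prop) (Or.inl (by norm_num))
    have hp : Tendsto (fun y : ℝ => (derivative R).eval y * Q.eval y) (𝓝[>] (-1:ℝ))
        (𝓝 ((derivative R).eval (-1) * Q.eval (-1))) := by
      exact (((Polynomial.continuous _).mul (Polynomial.continuous _)).tendsto _).mono_left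
        nhdsWithin_le_nhds
    have := hu1.mul (hu2.mul hp)
    rwa [zero_mul, mul_zero] at this
  have hii : IntervalIntegrable g volume (-1 : ℝ) 1 := by
    rw [intervalIntegrable_iff_integrableOn_Ioo_of_le (by norm_num)]
    exact hintg
  have hFTC := intervalIntegral.integral_eq_sub_of_hasDerivAt_of_tendsto (f := f) (f' := g)
    (by norm_num : (-1:ℝ) < 1) hderiv hii hT2 hT1
  rw [sub_zero] at hFTC
  have : ∫ x in Set.Ioo (-1:ℝ) 1, g x = 0 := by
    rw [← MeasureTheory.integral_Ioc_eq_integral_Ioo, ← intervalIntegral.integral_of_le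
      (by norm_num : (-1:ℝ) ≤ 1)]
    exact hFTC
  rw [hg] at this
  rw [MeasureTheory.integral_add hint1 hint2] at this
  linarith
noncomputable def Jint (α β : ℝ) (R Q : Polynomial ℝ) : ℝ :=
  ∫ x in Set.Ioo (-1:ℝ) 1, R.eval x * Q.eval x * ((1-x)^α * (1+x)^β)

lemma Jint_integrable {α β : ℝ} (hα : -1 < α) (hβ : -1 < β) (R Q : Polynomial ℝ) :
    IntegrableOn (fun x => R.eval x * Q.eval x * ((1-x)^α * (1+x)^β)) (Set.Ioo (-1:ℝ) 1) :=
  integrableOn_cont_mul_weight hα hβ (f := fun x => R.eval x * Q.eval x) (by fun_prop)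

lemma Jint_comm (α β : ℝ) (R Q : Polynomial ℝ) : Jint α β R Q = Jint α β Q R := by
  unfold Jint; congr 1; funext x; ring

lemma Jint_sub {α β : ℝ} (hα : -1 < α) (hβ : -1 < β) (R S Q : Polynomial ℝ) :
    Jint α β (R - S) Q = Jint α β R Q - Jint α β S Q := by
  unfold Jint
  rw [← MeasureTheory.integral_sub (Jint_integrable hα hβ R Q) (Jint_integrable hα hβ S Q)]
  congr 1; funext x; simp only [Polynomial.eval_sub]; ring

lemma Jint_C_mul (α β : ℝ) (c : ℝ) (R Q : Polynomial ℝ) :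
    Jint α β (Polynomial.C c * R) Q = c * Jint α β R Q := by
  unfold Jint
  rw [← MeasureTheory.integral_const_mul]
  congr 1; funext x; simp only [Polynomial.eval_mul, Polynomial.eval_C]; ring

lemma Jint_self_pos {α β : ℝ} (hα : -1 < α) (hβ : -1 < β) {R : Polynomial ℝ} (hR : R ≠ 0) :
    0 < Jint α β R R := by
  unfold Jint
  rw [MeasureTheory.setIntegral_pos_iff_support_of_nonneg_ae]
  · refine lt_of_lt_of_le ?_ (measure_mono (?_ :
      Set.Ioo (-1:ℝ) 1 \ {x | R.IsRoot x} ⊆ _))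
    · rw [measure_diff_null ((Polynomial.finite_setOf_isRoot hR).measure_zero _)]
      rw [Real.volume_Ioo]
      norm_num
    · rintro x ⟨hx, hroot⟩
      have h1 : (0:ℝ) < 1 - x := by linarith [hx.2]
      have h2 : (0:ℝ) < 1 + x := by linarith [hx.1]
      have hne : R.eval x ≠ 0 := hroot
      refine ⟨?_, hx⟩
      have : 0 < R.eval x * R.eval x * ((1-x)^α * (1+x)^β) :=
        mul_pos (mul_self_pos.mpr hne)
          (mul_pos (Real.rpow_pos_of_pos h1 _) (Real.rpow_pos_of_pos h2 _))
      exact this.ne'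
  · filter_upwards [ae_restrict_mem measurableSet_Ioo] with x hx
    have h1 : (0:ℝ) < 1 - x := by linarith [hx.2]
    have h2 : (0:ℝ) < 1 + x := by linarith [hx.1]
    exact mul_nonneg (mul_self_nonneg _)
      (mul_nonneg (Real.rpow_nonneg h1.le _) (Real.rpow_nonneg h2.le _))
  · exact Jint_integrable hα hβ R R

lemma Jint_Lop_symm {α β : ℝ} (hα : -1 < α) (hβ : -1 < β) (R Q : Polynomial ℝ) :
    Jint α β (Lop α β R) Q = Jint α β (Lop α β Q) R := by
  have h1 := ibp_core hα hβ R Q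
  have h2 := ibp_core hα hβ Q R
  unfold Jint
  rw [h1, h2]
  congr 1; congr 1; funext x; ring

lemma Lop_eq_C_mul {α β : ℝ} (hα : -1 < α) (hβ : -1 < β) {N : ℕ} (hN : 1 ≤ N)
    {P : Polynomial ℝ} (hP0 : P ≠ 0) (hPdeg : P.natDegree = N)
    (hPorth : ∀ Q : Polynomial ℝ, Q.natDegree < N → Jint α β P Q = 0) :
    Lop α β P = Polynomial.C ((Lop α β P).coeff N / P.coeff N) * P := by
  set c := (Lop α β P).coeff N / P.coeff N with hc
  set R := Lop α β P - Polynomial.C c * P with hRdef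
  by_cases hR : R = 0
  · rw [hRdef] at hR
    exact sub_eq_zero.mp hR
  exfalso
  have hPcoeff : P.coeff N ≠ 0 := by
    rw [← hPdeg]; exact Polynomial.leadingCoeff_ne_zero.mpr hP0
  have hRdeg : R.natDegree < N := by
    rw [Polynomial.natDegree_lt_iff_degree_lt hR, Polynomial.degree_lt_iff_coeff_zero]
    intro m hm
    have hm' : N ≤ m := by exact_mod_cast hm
    rw [hRdef, Polynomial.coeff_sub, Polynomial.coeff_C_mul]
    rcases eq_or_lt_of_le hm' with h | h
    · rw [← h, hc, div_mul_cancel₀ _ hPcoeff, sub_self]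
    · rw [Polynomial.coeff_eq_zero_of_natDegree_lt
        (lt_of_le_of_lt (Lop_natDegree_le α β P) (hPdeg ▸ h)),
        Polynomial.coeff_eq_zero_of_natDegree_lt (hPdeg ▸ h)]
      ring
  have hJRR : Jint α β R R = 0 := by
    have e1 : Jint α β (Lop α β P) R = 0 := by
      rw [Jint_Lop_symm hα hβ, Jint_comm]
      exact hPorth _ (lt_of_le_of_lt (Lop_natDegree_le α β R) hRdeg)
    have e2 : Jint α β P R = 0 := hPorth R hRdeg
    have expand : Jint α β R R = Jint α β (Lop α β P) R - c * Jint α β P R := by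
      conv_lhs => rw [hRdef]
      rw [Jint_sub hα hβ, Jint_C_mul]
    rw [expand, e1, e2]; ring
  exact absurd hJRR (Jint_self_pos hα hβ hR).ne'
lemma finset_derivative_prod {ι : Type*} [DecidableEq ι] (s : Finset ι)
    (f : ι → Polynomial ℝ) :
    Polynomial.derivative (∏ i ∈ s, f i)
      = ∑ b ∈ s, (∏ a ∈ s.erase b, f a) * Polynomial.derivative (f b) := by
  rw [Finset.prod_eq_multiset_prod, Polynomial.derivative_prod, Finset.sum_eq_multiset_sum]
  congr 1

lemma electrostatic {α β : ℝ} (hα : -1 < α) (hβ : -1 < β) {N : ℕ} (hN : 1 ≤ N)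
    {P : Polynomial ℝ} (hP0 : P ≠ 0) (hPdeg : P.natDegree = N)
    (hPorth : ∀ Q : Polynomial ℝ, Q.natDegree < N → Jint α β P Q = 0)
    (z : Fin N → ℝ) (hinj : Function.Injective z)
    (hzroot : ∀ i, P.eval (z i) = 0) (hzmem : ∀ i, z i ∈ Set.Ioo (-1:ℝ) 1) (j : Fin N) :
    (∑ i ∈ Finset.univ.erase j, (z j - z i)⁻¹)
      = (α+1)/(2*(1 - z j)) - (β+1)/(2*(1 + z j)) := by
  classical
  set V : Polynomial ℝ := ∏ i, (Polynomial.X - Polynomial.C (z i)) with hVdef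
  have hVmonic : V.Monic := Polynomial.monic_prod_of_monic _ _
    (fun i _ => Polynomial.monic_X_sub_C _)
  have hVdeg : V.natDegree = N := by
    rw [hVdef, Polynomial.natDegree_prod _ _ (fun i _ => Polynomial.X_sub_C_ne_zero _)]
    simp [Polynomial.natDegree_X_sub_C]
  have hdvd : V ∣ P := by
    have hM : Multiset.map z Finset.univ.val ≤ P.roots := by
      rw [Multiset.le_iff_count]
      intro r
      by_cases hr : r ∈ Multiset.map z Finset.univ.val
      · obtain ⟨i, _, rfl⟩ := Multiset.mem_map.mp hr
        have h1 : Multiset.count (z i) (Multiset.map z Finset.univ.val) ≤ 1 :=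
          Multiset.nodup_iff_count_le_one.mp (Finset.univ.nodup.map hinj) _
        have h2 : 1 ≤ P.roots.count (z i) := by
          rw [Polynomial.count_roots]
          exact (Polynomial.rootMultiplicity_pos hP0).mpr (hzroot i)
        omega
      · rw [Multiset.count_eq_zero_of_notMem hr]; exact Nat.zero_le _
    have step1 : V = (Multiset.map (fun r => Polynomial.X - Polynomial.C r)
        (Multiset.map z Finset.univ.val)).prod := by
      rw [Multiset.map_map]; rfl
    rw [step1]
    exact (Multiset.prod_dvd_prod_of_le (Multiset.map_le_map hM)).trans
      (Polynomial.prod_multiset_X_sub_C_dvd P)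
  obtain ⟨g, hg⟩ := hdvd
  have hgne : g ≠ 0 := by rintro rfl; rw [mul_zero] at hg; exact hP0 hg
  have hgdeg : g.natDegree = 0 := by
    have := Polynomial.natDegree_mul hVmonic.ne_zero hgne
    rw [← hg, hPdeg, hVdeg] at this
    omega
  obtain ⟨cc, hcc⟩ := Polynomial.natDegree_eq_zero.mp hgdeg
  have hccne : cc ≠ 0 := by rintro rfl; rw [← hcc] at hgne; simp at hgne
  have hP : P = Polynomial.C cc * V := by rw [hg, ← hcc, mul_comm]
  -- the ODE
  obtain hLop := Lop_eq_C_mul hα hβ hN hP0 hPdeg hPorth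
  set t := z j with ht
  set Wj : Polynomial ℝ := ∏ i ∈ Finset.univ.erase j, (Polynomial.X - Polynomial.C (z i))
    with hWdef
  have hVW : V = (Polynomial.X - Polynomial.C (z j)) * Wj :=
    (Finset.mul_prod_erase Finset.univ _ (Finset.mem_univ j)).symm
  have hWt : Wj.eval t = ∏ i ∈ Finset.univ.erase j, (t - z i) := by
    simp [hWdef, Polynomial.eval_prod]
  have hWt_ne : Wj.eval t ≠ 0 := by
    rw [hWt]
    exact Finset.prod_ne_zero_iff.mpr (fun i hi => sub_ne_zero.mpr
      (fun h => (Finset.mem_erase.mp hi).1 (hinj (h.symm.trans ht))))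
  have e1 : (Polynomial.derivative V).eval t = Wj.eval t := by
    rw [hVW, Polynomial.derivative_mul]
    simp [Polynomial.derivative_X_sub_C, ht]
  have e2 : (Polynomial.derivative (Polynomial.derivative V)).eval t
      = 2 * (Polynomial.derivative Wj).eval t := by
    rw [hVW]
    simp [Polynomial.derivative_mul, Polynomial.derivative_X_sub_C]
    ring
  set S : ℝ := ∑ i ∈ Finset.univ.erase j, (t - z i)⁻¹ with hS
  have hW't : (Polynomial.derivative Wj).eval t = S * Wj.eval t := by
    rw [hWdef, finset_derivative_prod, Polynomial.eval_finset_sum, hS, Finset.sum_mul]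
    apply Finset.sum_congr rfl
    intro k hk
    have hk_ne : t - z k ≠ 0 := sub_ne_zero.mpr
      (fun h => (Finset.mem_erase.mp hk).1 (hinj (h.symm.trans ht)))
    have hprod : (t - z k) * ∏ i ∈ (Finset.univ.erase j).erase k, (t - z i)
        = Wj.eval t := by
      rw [hWt]
      exact Finset.mul_prod_erase _ (fun i => t - z i) hk
    simp only [Polynomial.derivative_X_sub_C, Polynomial.eval_mul, Polynomial.eval_one,
      Polynomial.eval_prod, Polynomial.eval_sub, Polynomial.eval_X, Polynomial.eval_C, mul_one]
    field_simp
    linarith [hprod]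
  -- evaluate the ODE at t
  have hzj := hzmem j
  have h1t : (0:ℝ) < 1 - t := by rw [ht]; linarith [hzj.2]
  have h2t : (0:ℝ) < 1 + t := by rw [ht]; linarith [hzj.1]
  have hLt : (Lop α β P).eval t = 0 := by
    rw [hLop]
    simp [hzroot j, ht]
  have hP't : (Polynomial.derivative P).eval t = cc * Wj.eval t := by
    rw [hP, Polynomial.derivative_C_mul, Polynomial.eval_mul, Polynomial.eval_C, e1]
  have hP''t : (Polynomial.derivative (Polynomial.derivative P)).eval t
      = cc * (2 * (S * Wj.eval t)) := by
    rw [hP, Polynomial.derivative_C_mul, Polynomial.derivative_C_mul, Polynomial.eval_mul,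
      Polynomial.eval_C, e2, hW't]
  rw [Lop] at hLt
  simp only [Polynomial.eval_add, Polynomial.eval_mul, Polynomial.eval_sub, Polynomial.eval_one,
    Polynomial.eval_pow, Polynomial.eval_X, Polynomial.eval_C] at hLt
  rw [hP't, hP''t] at hLt
  have key : 2 * S * (1 - t) * (1 + t) = (α + β + 2) * t + α - β := by
    have hcW : cc * Wj.eval t ≠ 0 := mul_ne_zero hccne hWt_ne
    have := hLt
    have expand : (cc * Wj.eval t) * (2 * S * (1 - t) * (1 + t) - ((α + β + 2) * t + α - β))
        = 0 := by linarith [hLt]; 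
    rcases mul_eq_zero.mp expand with h | h
    · exact absurd h hcW
    · linarith [h]
  field_simp
  nlinarith [key]
lemma combo_pos {u v t : ℝ} (hu : 0 < u) (hv : 0 < v) (ht0 : 0 ≤ t) (ht1 : t ≤ 1) :
    0 < (1 - t) * u + t * v := by
  rcases le_or_gt t (1/2) with h | h
  · nlinarith
  · nlinarith

lemma log_combo_le {u v c d : ℝ} (hu : 0 < u) (hv : 0 < v) (hc : 0 ≤ c) (hd : 0 ≤ d)
    (hcd : c + d = 1) : c * Real.log u + d * Real.log v ≤ Real.log (c * u + d * v) := by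
  have := strictConcaveOn_log_Ioi.concaveOn.2 (Set.mem_Ioi.mpr hu) (Set.mem_Ioi.mpr hv) hc hd hcd
  simpa [smul_eq_mul] using this

lemma log_combo_lt {u v c d : ℝ} (hu : 0 < u) (hv : 0 < v) (huv : u ≠ v) (hc : 0 < c) (hd : 0 < d)
    (hcd : c + d = 1) : c * Real.log u + d * Real.log v < Real.log (c * u + d * v) := by
  have := strictConcaveOn_log_Ioi.2 (Set.mem_Ioi.mpr hu) (Set.mem_Ioi.mpr hv) huv hc hd hcd
  simpa [smul_eq_mul] using this

lemma concave_deriv_zero_max {h : ℝ → ℝ}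
    (hmid : (h 0 + h 1) / 2 < h (1/2))
    (hcc : ∀ t, 0 < t → t < 1/2 → (1 - 2*t) * h 0 + 2*t * h (1/2) ≤ h t)
    (hderiv : HasDerivAt h 0 0) : h 1 < h 0 := by
  have key : h (1/2) ≤ h 0 := by
    by_contra hlt
    push_neg at hlt
    set K := 2 * (h (1/2) - h 0) with hK
    have hKpos : 0 < K := by simp [hK]; linarith
    have hslope : ∀ t ∈ Set.Ioo (0:ℝ) (1/2), K ≤ slope h 0 t := by
      intro t ht
      rw [slope_def_field, sub_zero, le_div_iff₀ ht.1, hK]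
      nlinarith [hcc t ht.1 ht.2]
    have htend : Tendsto (slope h 0) (𝓝[>] (0:ℝ)) (𝓝 0) := by
      have := hasDerivAt_iff_tendsto_slope.mp hderiv
      refine this.mono_left (nhdsWithin_mono _ ?_)
      intro t ht
      exact ne_of_gt ht
    have : K ≤ 0 := by
      refine ge_of_tendsto htend ?_
      filter_upwards [Ioo_mem_nhdsGT (by norm_num : (0:ℝ) < 1/2)] with t ht
      exact hslope t ht
    linarith
  linarith
lemma pair_sum_reindex {N : ℕ} (z d : Fin N → ℝ) :
    ∑ pr ∈ Finset.univ.filter (fun pr : Fin N × Fin N => pr.1 < pr.2),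
        (d pr.2 - d pr.1) * (z pr.2 - z pr.1)⁻¹
      = ∑ j, d j * ∑ i ∈ Finset.univ.erase j, (z j - z i)⁻¹ := by
  classical
  have step1 : ∀ pr : Fin N × Fin N, (d pr.2 - d pr.1) * (z pr.2 - z pr.1)⁻¹
      = d pr.2 * (z pr.2 - z pr.1)⁻¹ + d pr.1 * (z pr.1 - z pr.2)⁻¹ := by
    intro pr
    rcases eq_or_ne (z pr.2 - z pr.1) 0 with hcase | hcase
    · have h' : z pr.1 - z pr.2 = 0 := by linarith
      rw [hcase, h']; simp
    · have h2 : z pr.1 - z pr.2 ≠ 0 := fun hc => hcase (by linarith)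
      field_simp
      ring
  rw [Finset.sum_congr rfl (fun pr _ => step1 pr), Finset.sum_add_distrib]
  have swapped : ∑ pr ∈ Finset.univ.filter (fun pr : Fin N × Fin N => pr.1 < pr.2),
      d pr.1 * (z pr.1 - z pr.2)⁻¹
      = ∑ pr ∈ Finset.univ.filter (fun pr : Fin N × Fin N => pr.2 < pr.1),
      d pr.2 * (z pr.2 - z pr.1)⁻¹ := by
    refine Finset.sum_nbij' (fun pr => pr.swap) (fun pr => pr.swap) ?_ ?_ ?_ ?_ ?_
    · intro pr hpr; simp only [Finset.mem_filter, Finset.mem_univ, true_and] at *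
      exact hpr
    · intro pr hpr; simp only [Finset.mem_filter, Finset.mem_univ, true_and] at *
      exact hpr
    · intro pr _; simp
    · intro pr _; simp
    · intro pr _; rfl
  rw [swapped]
  have hunion : ∀ G : Fin N × Fin N → ℝ,
      (∑ pr ∈ Finset.univ.filter (fun pr : Fin N × Fin N => pr.1 < pr.2), G pr)
      + (∑ pr ∈ Finset.univ.filter (fun pr : Fin N × Fin N => pr.2 < pr.1), G pr)
      = ∑ pr ∈ Finset.univ.filter (fun pr : Fin N × Fin N => pr.1 ≠ pr.2), G pr := by
    intro G
    rw [← Finset.sum_filter_add_sum_filter_not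
      (Finset.univ.filter (fun pr : Fin N × Fin N => pr.1 ≠ pr.2))
      (fun pr => pr.1 < pr.2), Finset.filter_filter, Finset.filter_filter]
    congr 1
    · apply Finset.sum_congr ?_ (fun _ _ => rfl)
      apply Finset.filter_congr
      intro pr _
      constructor
      · exact fun h => ⟨ne_of_lt h, h⟩
      · exact fun h => h.2
    · apply Finset.sum_congr ?_ (fun _ _ => rfl)
      apply Finset.filter_congr
      intro pr _
      constructor
      · intro hlt
        exact ⟨(ne_of_lt hlt).symm, not_lt.mpr hlt.le⟩
      · rintro ⟨hne, hnlt⟩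
        exact lt_of_le_of_ne (not_lt.mp hnlt) hne.symm
  rw [hunion]
  rw [Finset.sum_filter, Fintype.sum_prod_type, Finset.sum_comm]
  apply Finset.sum_congr rfl
  intro j _
  rw [Finset.mul_sum, ← Finset.filter_ne' Finset.univ j, Finset.sum_filter]
set_option maxHeartbeats 1000000 in
theorem jacobi_phi_unique_max
    (N : ℕ) (hN : 1 ≤ N) (a b : ℝ) (ha : 0 ≤ a) (hb : 0 < b)
    (α β : ℝ) (hα : α = a + b - 1) (hβ : β = b - 1)
    (P : Polynomial ℝ) (hPdeg : P.natDegree = N)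
    (hPorth : ∀ Q : Polynomial ℝ, Q.natDegree < N →
      ∫ x in Set.Ioo (-1 : ℝ) 1,
        P.eval x * Q.eval x * (1 - x) ^ α * (1 + x) ^ β = 0)
    (hPone : P.eval 1 = (∏ j ∈ Finset.range N, (α + 1 + j)) / (N.factorial : ℝ))
    (z : Fin N → ℝ) (hzmono : StrictMono z)
    (hzroot : ∀ i, P.eval (z i) = 0)
    (hzmem : ∀ i, z i ∈ Set.Ioo (-1 : ℝ) 1)
    (A : Set (Fin N → ℝ))
    (hA : A = {x | Monotone x ∧ ∀ i, x i ∈ Set.Icc (-1 : ℝ) 1})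
    (φ : (Fin N → ℝ) → ℝ)
    (hφ : φ = fun x =>
      (∏ p ∈ Finset.univ.filter (fun p : Fin N × Fin N => p.1 < p.2), (x p.2 - x p.1)) *
      ∏ j, ((1 - x j) ^ ((a + b) / 2) * (1 + x j) ^ (b / 2)))
    : z ∈ A ∧ ∀ x ∈ A, x ≠ z → φ x < φ z := by
  classical
  have hab : 0 < a + b := by linarith
  have hα' : (-1:ℝ) < α := by rw [hα]; linarith
  have hβ' : (-1:ℝ) < β := by rw [hβ]; linarith
  have hP0 : P ≠ 0 := by
    intro h0
    rw [h0] at hPone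
    simp only [Polynomial.eval_zero] at hPone
    have hprod : 0 < ∏ j ∈ Finset.range N, (α + 1 + j) := by
      apply Finset.prod_pos
      intro j _
      have : (0:ℝ) ≤ (j:ℝ) := Nat.cast_nonneg j
      rw [hα]; linarith
    have hfac : (0:ℝ) < (N.factorial : ℝ) := by positivity
    have := div_pos hprod hfac
    rw [← hPone] at this
    exact lt_irrefl 0 this
  have hPorth' : ∀ Q : Polynomial ℝ, Q.natDegree < N → Jint α β P Q = 0 := by
    intro Q hQ
    have e : Jint α β P Q = ∫ x in Set.Ioo (-1:ℝ) 1,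
        P.eval x * Q.eval x * (1 - x) ^ α * (1 + x) ^ β := by
      unfold Jint; congr 1; funext x; ring
    rw [e]; exact hPorth Q hQ
  have hES := fun j => electrostatic hα' hβ' hN hP0 hPdeg hPorth' z hzmono.injective
    hzroot hzmem j
  have hzA : z ∈ A := by
    rw [hA]; exact ⟨hzmono.monotone, fun i => ⟨(hzmem i).1.le, (hzmem i).2.le⟩⟩
  have hφz_pos : 0 < φ z := by
    rw [hφ]
    refine mul_pos (Finset.prod_pos ?_) (Finset.prod_pos ?_)
    · intro pr hpr
      exact sub_pos.mpr (hzmono (Finset.mem_filter.mp hpr).2)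
    · intro j _
      exact mul_pos (Real.rpow_pos_of_pos (by linarith [(hzmem j).2]) _)
        (Real.rpow_pos_of_pos (by linarith [(hzmem j).1]) _)
  refine ⟨hzA, ?_⟩
  intro x hxA hxz
  rw [hA] at hxA
  obtain ⟨hxmono, hxmem⟩ := hxA
  by_cases hsm : StrictMono x
  swap
  · -- not strictly monotone: a repeated coordinate kills the Vandermonde factor
    unfold StrictMono at hsm
    push_neg at hsm
    obtain ⟨i, j, hij, hle⟩ := hsm
    have hzero : x j - x i = 0 := by
      have := hxmono hij.le; linarith
    have hφx : φ x = 0 := by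
      simp only [hφ]
      rw [Finset.prod_eq_zero (Finset.mem_filter.mpr ⟨Finset.mem_univ (i, j), hij⟩) hzero,
        zero_mul]
    rw [hφx]; exact hφz_pos
  by_cases hio : ∀ i, x i ∈ Set.Ioo (-1:ℝ) 1
  swap
  · -- boundary coordinate kills a weight factor
    push_neg at hio
    obtain ⟨i, hi⟩ := hio
    have hxi := hxmem i
    have hzero : (1 - x i) ^ ((a+b)/2) * (1 + x i) ^ (b/2) = 0 := by
      rcases eq_or_lt_of_le hxi.1 with hc | hc
      · have h1 : (1:ℝ) + x i = 0 := by rw [← hc]; ring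
        rw [h1, Real.zero_rpow (ne_of_gt (by linarith : (0:ℝ) < b/2)), mul_zero]
      · rcases eq_or_lt_of_le hxi.2 with hc' | hc'
        · have h1 : (1:ℝ) - x i = 0 := by rw [hc']; ring
          rw [h1, Real.zero_rpow (ne_of_gt (by linarith : (0:ℝ) < (a+b)/2)), zero_mul]
        · exact absurd ⟨hc, hc'⟩ hi
    have hφx : φ x = 0 := by
      simp only [hφ]
      rw [Finset.prod_eq_zero (Finset.mem_univ i) hzero, mul_zero]
    rw [hφx]; exact hφz_pos
  -- interior case
  set d : Fin N → ℝ := fun i => x i - z i with hd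
  have hdne : ∃ j, d j ≠ 0 := by
    by_contra hc
    push_neg at hc
    apply hxz
    funext i
    have := hc i
    rw [hd] at this
    simp only at this
    linarith
  set pairs := Finset.univ.filter (fun pr : Fin N × Fin N => pr.1 < pr.2) with hpairs
  set F1 : ℝ → ℝ := fun t =>
    ∑ pr ∈ pairs, Real.log ((z pr.2 - z pr.1) + t * (d pr.2 - d pr.1)) with hF1
  set F2 : ℝ → ℝ := fun t =>
    ∑ j, ((a+b)/2 * Real.log ((1 - z j) - t * d j)
      + b/2 * Real.log ((1 + z j) + t * d j)) with hF2
  set F : ℝ → ℝ := fun t => F1 t + F2 t with hF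
  -- positivity of the affine arguments
  have hApos : ∀ pr ∈ pairs, ∀ t : ℝ, 0 ≤ t → t ≤ 1 →
      0 < (z pr.2 - z pr.1) + t * (d pr.2 - d pr.1) := by
    intro pr hpr t ht0 ht1
    have h1 : 0 < z pr.2 - z pr.1 := sub_pos.mpr (hzmono (Finset.mem_filter.mp hpr).2)
    have h2 : 0 < x pr.2 - x pr.1 := sub_pos.mpr (hsm (Finset.mem_filter.mp hpr).2)
    have := combo_pos h1 h2 ht0 ht1
    have e : (1 - t) * (z pr.2 - z pr.1) + t * (x pr.2 - x pr.1)
        = (z pr.2 - z pr.1) + t * (d pr.2 - d pr.1) := by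
      rw [hd]; ring
    linarith [e ▸ this]
  have hCpos : ∀ (j : Fin N) (t : ℝ), 0 ≤ t → t ≤ 1 → 0 < (1 - z j) - t * d j := by
    intro j t ht0 ht1
    have h1 : 0 < 1 - z j := by linarith [(hzmem j).2]
    have h2 : 0 < 1 - x j := by linarith [(hio j).2]
    have := combo_pos h1 h2 ht0 ht1
    have e : (1 - t) * (1 - z j) + t * (1 - x j) = (1 - z j) - t * d j := by rw [hd]; ring
    linarith [e ▸ this]
  have hDpos : ∀ (j : Fin N) (t : ℝ), 0 ≤ t → t ≤ 1 → 0 < (1 + z j) + t * d j := by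
    intro j t ht0 ht1
    have h1 : 0 < 1 + z j := by linarith [(hzmem j).1]
    have h2 : 0 < 1 + x j := by linarith [(hio j).1]
    have := combo_pos h1 h2 ht0 ht1
    have e : (1 - t) * (1 + z j) + t * (1 + x j) = (1 + z j) + t * d j := by rw [hd]; ring
    linarith [e ▸ this]
  -- φ along the segment equals exp ∘ F
  have hval : ∀ t : ℝ, 0 ≤ t → t ≤ 1 → φ (fun i => z i + t * d i) = Real.exp (F t) := by
    intro t ht0 ht1
    rw [hφ, hF]
    simp only [hF1, hF2]
    rw [Real.exp_add, Real.exp_sum, Real.exp_sum]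
    congr 1
    · apply Finset.prod_congr rfl
      intro pr hpr
      rw [Real.exp_log (hApos pr hpr t ht0 ht1)]
      ring
    · apply Finset.prod_congr rfl
      intro j _
      have hC := hCpos j t ht0 ht1
      have hD := hDpos j t ht0 ht1
      have e1 : 1 - (z j + t * d j) = (1 - z j) - t * d j := by ring
      have e2 : 1 + (z j + t * d j) = (1 + z j) + t * d j := by ring
      rw [e1, e2, Real.exp_add, Real.rpow_def_of_pos hC, Real.rpow_def_of_pos hD,
        mul_comm (Real.log ((1 - z j) - t * d j)), mul_comm (Real.log ((1 + z j) + t * d j))]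
  -- derivative of F at 0 is 0
  have hderiv : HasDerivAt F 0 0 := by
    have h1 : HasDerivAt F1
        (∑ pr ∈ pairs, (d pr.2 - d pr.1) / ((z pr.2 - z pr.1) + 0 * (d pr.2 - d pr.1)))
        0 := by
      rw [hF1]
      apply HasDerivAt.fun_sum
      intro pr hpr
      have hlin : HasDerivAt (fun t : ℝ => (z pr.2 - z pr.1) + t * (d pr.2 - d pr.1))
          (d pr.2 - d pr.1) 0 := (hasDerivAt_mul_const _).const_add _
      exact hlin.log (hApos pr hpr 0 le_rfl zero_le_one).ne'
    have h2 : HasDerivAt F2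
        (∑ j, ((a+b)/2 * (-d j / ((1 - z j) - 0 * d j))
          + b/2 * (d j / ((1 + z j) + 0 * d j)))) 0 := by
      rw [hF2]
      apply HasDerivAt.fun_sum
      intro j _
      have hlinC : HasDerivAt (fun t : ℝ => (1 - z j) - t * d j) (-(d j)) 0 :=
        (hasDerivAt_mul_const _).const_sub _
      have hlinD : HasDerivAt (fun t : ℝ => (1 + z j) + t * d j) (d j) 0 :=
        (hasDerivAt_mul_const _).const_add _
      have hC := (hlinC.log (hCpos j 0 le_rfl zero_le_one).ne').const_mul ((a+b)/2)
      have hD := (hlinD.log (hDpos j 0 le_rfl zero_le_one).ne').const_mul (b/2)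
      have := hC.add hD
      convert this using 1
      rfl
    have hsum := h1.add h2
    have hzero : (∑ pr ∈ pairs, (d pr.2 - d pr.1) / ((z pr.2 - z pr.1) + 0 * (d pr.2 - d pr.1)))
        + (∑ j, ((a+b)/2 * (-d j / ((1 - z j) - 0 * d j))
          + b/2 * (d j / ((1 + z j) + 0 * d j)))) = 0 := by
      have e1 : (∑ pr ∈ pairs, (d pr.2 - d pr.1) / ((z pr.2 - z pr.1) + 0 * (d pr.2 - d pr.1)))
          = ∑ pr ∈ pairs, (d pr.2 - d pr.1) * (z pr.2 - z pr.1)⁻¹ := by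
        apply Finset.sum_congr rfl
        intro pr _
        rw [zero_mul, add_zero, div_eq_mul_inv]
      rw [e1, hpairs, pair_sum_reindex z d]
      have e2 : (∑ j, ((a+b)/2 * (-d j / ((1 - z j) - 0 * d j))
            + b/2 * (d j / ((1 + z j) + 0 * d j))))
          = ∑ j, (-(d j * ((a+b)/2 / (1 - z j))) + d j * (b/2 / (1 + z j))) := by
        apply Finset.sum_congr rfl
        intro j _
        simp only [zero_mul, sub_zero, add_zero]
        ring
      rw [e2, ← Finset.sum_add_distrib]
      apply Finset.sum_eq_zero
      intro j _
      have hSj := hES j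
      have hC : (0:ℝ) < 1 - z j := by linarith [(hzmem j).2]
      have hD : (0:ℝ) < 1 + z j := by linarith [(hzmem j).1]
      rw [hSj, hα, hβ]
      field_simp
      ring
    rw [hF]
    have := hsum
    rw [hzero] at this
    exact this
  -- concavity inequalities
  have hmidF1 : (F1 0 + F1 1) / 2 ≤ F1 (1/2) := by
    simp only [hF1]
    rw [div_le_iff₀ (by norm_num : (0:ℝ) < 2)]
    rw [← Finset.sum_add_distrib, Finset.sum_mul]
    have : ∀ pr ∈ pairs, Real.log ((z pr.2 - z pr.1) + 0 * (d pr.2 - d pr.1))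
        + Real.log ((z pr.2 - z pr.1) + 1 * (d pr.2 - d pr.1))
        ≤ Real.log ((z pr.2 - z pr.1) + 1/2 * (d pr.2 - d pr.1)) * 2 := by
      intro pr hpr
      have h0 := hApos pr hpr 0 le_rfl zero_le_one
      have h1 := hApos pr hpr 1 zero_le_one le_rfl
      have hcomb := log_combo_le h0 h1 (by norm_num : (0:ℝ) ≤ 1/2) (by norm_num : (0:ℝ) ≤ 1/2)
        (by norm_num)
      have e : (1/2 : ℝ) * ((z pr.2 - z pr.1) + 0 * (d pr.2 - d pr.1))
          + 1/2 * ((z pr.2 - z pr.1) + 1 * (d pr.2 - d pr.1))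
          = (z pr.2 - z pr.1) + 1/2 * (d pr.2 - d pr.1) := by ring
      rw [e] at hcomb
      linarith
    exact Finset.sum_le_sum this
  obtain ⟨j0, hj0⟩ := hdne
  have hpw : (0:ℝ) ≤ (a+b)/2 := by linarith
  have hqw : (0:ℝ) < b/2 := by linarith
  have hmidF2 : (F2 0 + F2 1) / 2 < F2 (1/2) := by
    simp only [hF2]
    rw [div_lt_iff₀ (by norm_num : (0:ℝ) < 2)]
    rw [← Finset.sum_add_distrib, Finset.sum_mul]
    apply Finset.sum_lt_sum
    · intro j _
      have hC0 := hCpos j 0 le_rfl zero_le_one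
      have hC1 := hCpos j 1 zero_le_one le_rfl
      have hD0 := hDpos j 0 le_rfl zero_le_one
      have hD1 := hDpos j 1 zero_le_one le_rfl
      have lC := log_combo_le hC0 hC1 (by norm_num : (0:ℝ) ≤ 1/2)
        (by norm_num : (0:ℝ) ≤ 1/2) (by norm_num)
      have lD := log_combo_le hD0 hD1 (by norm_num : (0:ℝ) ≤ 1/2)
        (by norm_num : (0:ℝ) ≤ 1/2) (by norm_num)
      have eC : (1/2:ℝ) * ((1 - z j) - 0 * d j) + 1/2 * ((1 - z j) - 1 * d j)
          = (1 - z j) - 1/2 * d j := by ring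
      have eD : (1/2:ℝ) * ((1 + z j) + 0 * d j) + 1/2 * ((1 + z j) + 1 * d j)
          = (1 + z j) + 1/2 * d j := by ring
      rw [eC] at lC
      rw [eD] at lD
      have mC := mul_le_mul_of_nonneg_left lC hpw
      have mD := mul_le_mul_of_nonneg_left lD hqw.le
      nlinarith [mC, mD]
    · refine ⟨j0, Finset.mem_univ j0, ?_⟩
      have hC0 := hCpos j0 0 le_rfl zero_le_one
      have hC1 := hCpos j0 1 zero_le_one le_rfl
      have hD0 := hDpos j0 0 le_rfl zero_le_one
      have hD1 := hDpos j0 1 zero_le_one le_rfl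
      have lC := log_combo_le hC0 hC1 (by norm_num : (0:ℝ) ≤ 1/2)
        (by norm_num : (0:ℝ) ≤ 1/2) (by norm_num)
      have hne : (1 + z j0) + 0 * d j0 ≠ (1 + z j0) + 1 * d j0 := by
        intro heq
        apply hj0
        linarith [heq]
      have lD := log_combo_lt hD0 hD1 hne (by norm_num : (0:ℝ) < 1/2)
        (by norm_num : (0:ℝ) < 1/2) (by norm_num)
      have eC : (1/2:ℝ) * ((1 - z j0) - 0 * d j0) + 1/2 * ((1 - z j0) - 1 * d j0)
          = (1 - z j0) - 1/2 * d j0 := by ring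
      have eD : (1/2:ℝ) * ((1 + z j0) + 0 * d j0) + 1/2 * ((1 + z j0) + 1 * d j0)
          = (1 + z j0) + 1/2 * d j0 := by ring
      rw [eC] at lC
      rw [eD] at lD
      have mC := mul_le_mul_of_nonneg_left lC hpw
      have mD := mul_lt_mul_of_pos_left lD hqw
      nlinarith [mC, mD]
  have hmid : (F 0 + F 1) / 2 < F (1/2) := by
    simp only [hF]
    linarith [hmidF1, hmidF2]
  have hcc : ∀ t : ℝ, 0 < t → t < 1/2 → (1 - 2*t) * F 0 + 2*t * F (1/2) ≤ F t := by
    intro t ht0 ht2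
    have hc1 : (0:ℝ) ≤ 1 - 2*t := by linarith
    have hc2 : (0:ℝ) ≤ 2*t := by linarith
    have hcd : (1 - 2*t) + 2*t = 1 := by ring
    have ht01 : (0:ℝ) ≤ t := ht0.le
    have ht11 : t ≤ 1 := by linarith
    have hS1 : (1 - 2*t) * F1 0 + 2*t * F1 (1/2) ≤ F1 t := by
      simp only [hF1]
      rw [Finset.mul_sum, Finset.mul_sum, ← Finset.sum_add_distrib]
      apply Finset.sum_le_sum
      intro pr hpr
      have h0 := hApos pr hpr 0 le_rfl zero_le_one
      have hh := hApos pr hpr (1/2) (by norm_num) (by norm_num)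
      have hcomb := log_combo_le h0 hh hc1 hc2 hcd
      have e : (1 - 2*t) * ((z pr.2 - z pr.1) + 0 * (d pr.2 - d pr.1))
          + 2*t * ((z pr.2 - z pr.1) + 1/2 * (d pr.2 - d pr.1))
          = (z pr.2 - z pr.1) + t * (d pr.2 - d pr.1) := by ring
      rw [e] at hcomb
      exact hcomb
    have hS2 : (1 - 2*t) * F2 0 + 2*t * F2 (1/2) ≤ F2 t := by
      simp only [hF2]
      rw [Finset.mul_sum, Finset.mul_sum, ← Finset.sum_add_distrib]
      apply Finset.sum_le_sum
      intro j _
      have hC0 := hCpos j 0 le_rfl zero_le_one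
      have hCh := hCpos j (1/2) (by norm_num) (by norm_num)
      have hD0 := hDpos j 0 le_rfl zero_le_one
      have hDh := hDpos j (1/2) (by norm_num) (by norm_num)
      have lC := log_combo_le hC0 hCh hc1 hc2 hcd
      have lD := log_combo_le hD0 hDh hc1 hc2 hcd
      have eC : (1 - 2*t) * ((1 - z j) - 0 * d j) + 2*t * ((1 - z j) - 1/2 * d j)
          = (1 - z j) - t * d j := by ring
      have eD : (1 - 2*t) * ((1 + z j) + 0 * d j) + 2*t * ((1 + z j) + 1/2 * d j)
          = (1 + z j) + t * d j := by ring
      rw [eC] at lC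
      rw [eD] at lD
      have mC := mul_le_mul_of_nonneg_left lC hpw
      have mD := mul_le_mul_of_nonneg_left lD hqw.le
      nlinarith [mC, mD]
    simp only [hF]
    linarith [hS1, hS2]
  have hfin : F 1 < F 0 := concave_deriv_zero_max hmid hcc hderiv
  have hx_eq : x = fun i => z i + 1 * d i := by
    funext i
    simp only [hd]
    ring
  have hz_eq : z = fun i => z i + 0 * d i := by
    funext i
    ring
  have e1 : φ x = Real.exp (F 1) := by
    rw [hx_eq]
    exact hval 1 zero_le_one le_rfl
  have e0 : φ z = Real.exp (F 0) := by
    conv_lhs => rw [hz_eq]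
    exact hval 0 le_rfl zero_le_one
  rw [e1, e0]
  exact Real.exp_lt_exp.mpr hfin
end

section
/- Let N ≥ 1, α, β > −1, and let z_1 < ... < z_N be the ordered zeros of the Jacobi polynomial P_N^{(α,β)}. Let S̃ be the N×N matrix with entries s̃_{j,j} = 4Σ_{l≠j}(1−z_j²)/(z_j−z_l)² + 2(α+1)(1+z_j)/(1−z_j) + 2(β+1)(1−z_j)/(1+z_j) and s̃_{i,j} = −4√((1−z_i²)(1−z_j²))/(z_i−z_j)² for i ≠ j. Then the vector v₁ = (√(1−z_1²), ..., √(1−z_N²))^T satisfies S̃ v₁ = 2(2N+α+β) v₁; that is, v₁ is an eigenvector of S̃ with eigenvalue λ₁ = 2(2N+α+β). -/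
open MeasureTheory Filter Real Finset Topology

section JacobiAux
open Set Polynomial

lemma jacobi_contOn (α β : ℝ) (A : Polynomial ℝ) (s : Set ℝ)
    (hs : ∀ x ∈ s, -1 < x ∧ x < 1) :
    ContinuousOn (fun x => A.eval x * (1 - x) ^ α * (1 + x) ^ β) s := by
  refine ContinuousOn.mul (ContinuousOn.mul (A.continuous_aeval.continuousOn) ?_) ?_
  · exact ((continuous_const.sub continuous_id).continuousOn).rpow_const
      (fun x hx => Or.inl (by have := hs x hx; simp; linarith [this.2]))
  · exact ((continuous_const.add continuous_id).continuousOn).rpow_const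
      (fun x hx => Or.inl (by have := hs x hx; simp; linarith [this.1]))

lemma jacobi_int (α β : ℝ) (hα : -1 < α) (hβ : -1 < β) (A : Polynomial ℝ) :
    IntegrableOn (fun x => A.eval x * (1 - x) ^ α * (1 + x) ^ β) (Set.Ioo (-1 : ℝ) 1) := by
  obtain ⟨CA, hCA⟩ : ∃ C, ∀ x ∈ Icc (-1:ℝ) 1, ‖A.eval x‖ ≤ C :=
    isCompact_Icc.exists_bound_of_continuousOn (A.continuous_aeval.continuousOn)
  have hCA0 : 0 ≤ CA := le_trans (norm_nonneg _) (hCA 0 (by norm_num))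
  have h1 : IntegrableOn (fun x => A.eval x * (1 - x) ^ α * (1 + x) ^ β) (Set.Ioc (-1:ℝ) 0) := by
    have hg : IntegrableOn (fun x => (1 + x) ^ β) (Set.Ioc (-1:ℝ) 0) := by
      have h0 := (intervalIntegral.intervalIntegrable_rpow' (a := 0) (b := 1) hβ).comp_add_right 1
      have h1 := h0.1
      norm_num at h1
      exact h1.congr_fun (fun x _ => by rw [add_comm]) measurableSet_Ioc
    have : IntegrableOn (fun x => (A.eval x * (1 - x) ^ α) * (1 + x) ^ β) (Set.Ioc (-1:ℝ) 0) := by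
      refine Integrable.bdd_mul (c := CA * max (2 ^ α) 1) hg ?_ ?_
      · refine ContinuousOn.aestronglyMeasurable ?_ measurableSet_Ioc
        refine ContinuousOn.mul (A.continuous_aeval.continuousOn) ?_
        exact ((continuous_const.sub continuous_id).continuousOn).rpow_const
          (fun x hx => Or.inl (by simp only [Set.mem_Ioc] at hx; simp; linarith [hx.2]))
      · refine (ae_restrict_iff' measurableSet_Ioc).2 (ae_of_all _ fun x hx => ?_)
        simp only [Set.mem_Ioc] at hx
        have hx1 : (1:ℝ) ≤ 1 - x := by linarith [hx.2]
        have hx2 : 1 - x ≤ 2 := by linarith [hx.1]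
        have hb : ‖(1 - x) ^ α‖ ≤ max (2 ^ α) 1 := by
          rw [Real.norm_eq_abs, abs_of_nonneg (Real.rpow_nonneg (by linarith) _)]
          rcases le_or_gt 0 α with h|h
          · exact le_max_of_le_left (Real.rpow_le_rpow (by linarith) hx2 h)
          · exact le_max_of_le_right (Real.rpow_le_one_of_one_le_of_nonpos hx1 h.le)
        calc ‖A.eval x * (1 - x) ^ α‖ = ‖A.eval x‖ * ‖(1 - x) ^ α‖ := norm_mul _ _
          _ ≤ CA * max (2 ^ α) 1 :=
              mul_le_mul (hCA x (by constructor <;> linarith [hx.1, hx.2])) hb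
                (norm_nonneg _) hCA0
    exact this
  have h2 : IntegrableOn (fun x => A.eval x * (1 - x) ^ α * (1 + x) ^ β) (Set.Ioo (0:ℝ) 1) := by
    have hg : IntegrableOn (fun x => (1 - x) ^ α) (Set.Ioo (0:ℝ) 1) := by
      have h0 := (intervalIntegral.intervalIntegrable_rpow' (a := 0) (b := 1) hα).comp_sub_left 1
      have h1 := h0.2
      norm_num at h1
      exact (h1.mono_set Set.Ioo_subset_Ioc_self)
    have : IntegrableOn (fun x => (A.eval x * (1 + x) ^ β) * (1 - x) ^ α) (Set.Ioo (0:ℝ) 1) := by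
      refine Integrable.bdd_mul (c := CA * max (2 ^ β) 1) hg ?_ ?_
      · refine ContinuousOn.aestronglyMeasurable ?_ measurableSet_Ioo
        refine ContinuousOn.mul (A.continuous_aeval.continuousOn) ?_
        exact ((continuous_const.add continuous_id).continuousOn).rpow_const
          (fun x hx => Or.inl (by simp only [Set.mem_Ioo] at hx; simp; linarith [hx.1]))
      · refine (ae_restrict_iff' measurableSet_Ioo).2 (ae_of_all _ fun x hx => ?_)
        simp only [Set.mem_Ioo] at hx
        have hx1 : (1:ℝ) ≤ 1 + x := by linarith [hx.1]
        have hx2 : 1 + x ≤ 2 := by linarith [hx.2]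
        have hb : ‖(1 + x) ^ β‖ ≤ max (2 ^ β) 1 := by
          rw [Real.norm_eq_abs, abs_of_nonneg (Real.rpow_nonneg (by linarith) _)]
          rcases le_or_gt 0 β with h|h
          · exact le_max_of_le_left (Real.rpow_le_rpow (by linarith) hx2 h)
          · exact le_max_of_le_right (Real.rpow_le_one_of_one_le_of_nonpos hx1 h.le)
        calc ‖A.eval x * (1 + x) ^ β‖ = ‖A.eval x‖ * ‖(1 + x) ^ β‖ := norm_mul _ _
          _ ≤ CA * max (2 ^ β) 1 :=
              mul_le_mul (hCA x (by constructor <;> linarith [hx.1, hx.2])) hb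
                (norm_nonneg _) hCA0
    exact this.congr_fun (fun x _ => by ring) measurableSet_Ioo
  have h3 : IntegrableOn (fun x => A.eval x * (1 - x) ^ α * (1 + x) ^ β)
      (Set.Ioc (-1:ℝ) 0 ∪ Set.Ioo (0:ℝ) 1) := h1.union h2
  refine h3.mono_set fun x hx => ?_
  rcases le_or_gt x 0 with h|h
  · exact Or.inl ⟨hx.1, h⟩
  · exact Or.inr ⟨h, hx.2⟩

lemma jacobi_vanish (α β : ℝ) (hα : -1 < α) (hβ : -1 < β) (R : Polynomial ℝ)
    (h : ∫ x in Set.Ioo (-1:ℝ) 1, R.eval x * R.eval x * (1 - x) ^ α * (1 + x) ^ β = 0) :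
    R = 0 := by
  set f : ℝ → ℝ := fun x => R.eval x * R.eval x * (1 - x) ^ α * (1 + x) ^ β with hf
  have hint : IntegrableOn f (Set.Ioo (-1:ℝ) 1) := by
    have := jacobi_int α β hα hβ (R * R)
    exact this.congr_fun (fun x _ => by simp [hf]) measurableSet_Ioo
  have hnn : 0 ≤ᵐ[volume.restrict (Set.Ioo (-1:ℝ) 1)] f := by
    refine (ae_restrict_iff' measurableSet_Ioo).2 (ae_of_all _ fun x hx => ?_)
    have h1 : (0:ℝ) < 1 - x := by linarith [hx.2]
    have h2 : (0:ℝ) < 1 + x := by linarith [hx.1]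
    simp only [hf, Pi.zero_apply]
    exact mul_nonneg (mul_nonneg (mul_self_nonneg _) (Real.rpow_pos_of_pos h1 α).le)
      (Real.rpow_pos_of_pos h2 β).le
  have hae : f =ᵐ[volume.restrict (Set.Ioo (-1:ℝ) 1)] 0 :=
    (integral_eq_zero_iff_of_nonneg_ae hnn hint).1 h
  have hzero : ∀ x ∈ Set.Ioo (-1:ℝ) 1, R.eval x = 0 := by
    intro x₀ hx₀
    by_contra hR
    have hopen : IsOpen {x | x ∈ Set.Ioo (-1:ℝ) 1 ∧ R.eval x ≠ 0} := by
      have : {x | x ∈ Set.Ioo (-1:ℝ) 1 ∧ R.eval x ≠ 0} =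
          Set.Ioo (-1:ℝ) 1 ∩ (fun x => R.eval x) ⁻¹' {0}ᶜ := by
        ext y
        simp only [Set.mem_setOf_eq, Set.mem_inter_iff, Set.mem_preimage, Set.mem_compl_iff,
          Set.mem_singleton_iff]
      rw [this]
      exact isOpen_Ioo.inter (isOpen_compl_singleton.preimage R.continuous_aeval)
    have hne : {x | x ∈ Set.Ioo (-1:ℝ) 1 ∧ R.eval x ≠ 0}.Nonempty := ⟨x₀, hx₀, hR⟩
    have hpos := hopen.measure_pos volume hne
    have hsub : {x | x ∈ Set.Ioo (-1:ℝ) 1 ∧ R.eval x ≠ 0} ⊆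
        {x | ¬ (x ∈ Set.Ioo (-1:ℝ) 1 → f x = 0)} := by
      intro x hx
      simp only [Set.mem_setOf_eq]
      intro himp
      have h1 : (0:ℝ) < 1 - x := by linarith [hx.1.2]
      have h2 : (0:ℝ) < 1 + x := by linarith [hx.1.1]
      have : f x ≠ 0 := by
        simp only [hf]
        exact mul_ne_zero (mul_ne_zero (mul_ne_zero hx.2 hx.2) (Real.rpow_pos_of_pos h1 α).ne')
          (Real.rpow_pos_of_pos h2 β).ne'
      exact this (himp hx.1)
    have hnull : volume {x | ¬ (x ∈ Set.Ioo (-1:ℝ) 1 → f x = 0)} = 0 := by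
      have := (ae_restrict_iff' measurableSet_Ioo).1 hae
      simpa [Filter.EventuallyEq, ae_iff] using this
    exact absurd (measure_mono_null hsub hnull) hpos.ne'
  have hinf : {x : ℝ | R.IsRoot x}.Infinite :=
    Set.Infinite.mono (fun x hx => hzero x hx) (Set.Ioo_infinite (by norm_num))
  exact Polynomial.eq_zero_of_infinite_isRoot R hinf

noncomputable def jacobiOp (α β : ℝ) (A : Polynomial ℝ) : Polynomial ℝ :=
  (1 - X ^ 2) * derivative (derivative A) +
    (C (β - α) - C (α + β + 2) * X) * derivative A


lemma jacobi_ibp (α β : ℝ) (hα : -1 < α) (hβ : -1 < β) (A B : Polynomial ℝ) :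
    ∫ x in Set.Ioo (-1:ℝ) 1,
      ((jacobiOp α β A).eval x * B.eval x - A.eval x * (jacobiOp α β B).eval x) *
        (1 - x) ^ α * (1 + x) ^ β = 0 := by
  set D : Polynomial ℝ := jacobiOp α β A * B - A * jacobiOp α β B with hD
  set Cp : Polynomial ℝ := derivative A * B - A * derivative B with hCp
  set G : ℝ → ℝ := fun x => (1 - x) ^ (α + 1) * (1 + x) ^ (β + 1) * Cp.eval x with hG
  set g : ℝ → ℝ := fun x => D.eval x * (1 - x) ^ α * (1 + x) ^ β with hg
  have hderiv : ∀ x ∈ Set.Ioo (-1:ℝ) 1, HasDerivAt G (g x) x := by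
    intro x hx
    have h1 : (0:ℝ) < 1 - x := by linarith [hx.2]
    have h2 : (0:ℝ) < 1 + x := by linarith [hx.1]
    have d1 : HasDerivAt (fun y : ℝ => (1 - y) ^ (α + 1))
        (-(α + 1) * (1 - x) ^ α) x := by
      have hb : HasDerivAt (fun y : ℝ => 1 - y) (-1) x := by
        simpa using (hasDerivAt_id x).const_sub 1
      have hr : HasDerivAt (fun y : ℝ => y ^ (α + 1))
          ((α + 1) * (1 - x) ^ (α + 1 - 1)) (1 - x) :=
        Real.hasDerivAt_rpow_const (Or.inl h1.ne')
      have hcomp : HasDerivAt (fun y : ℝ => (1 - y) ^ (α + 1))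
          ((α + 1) * (1 - x) ^ (α + 1 - 1) * (-1)) x := hr.comp x hb
      convert hcomp using 1
      rw [add_sub_cancel_right]; ring
    have d2 : HasDerivAt (fun y : ℝ => (1 + y) ^ (β + 1))
        ((β + 1) * (1 + x) ^ β) x := by
      have hb : HasDerivAt (fun y : ℝ => 1 + y) 1 x := by
        simpa using (hasDerivAt_id x).const_add 1
      have hr : HasDerivAt (fun y : ℝ => y ^ (β + 1))
          ((β + 1) * (1 + x) ^ (β + 1 - 1)) (1 + x) :=
        Real.hasDerivAt_rpow_const (Or.inl h2.ne')
      have hcomp : HasDerivAt (fun y : ℝ => (1 + y) ^ (β + 1))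
          ((β + 1) * (1 + x) ^ (β + 1 - 1) * 1) x := hr.comp x hb
      convert hcomp using 1
      rw [add_sub_cancel_right]; ring
    have d3 : HasDerivAt (fun y : ℝ => Cp.eval y) ((derivative Cp).eval x) x :=
      Cp.hasDerivAt x
    have dG := ((d1.mul d2).mul d3)
    convert dG using 1
    · rfl
    · rfl
    · rfl
    have e1 : (1 - x) ^ (α + 1) = (1 - x) ^ α * (1 - x) := by
      rw [Real.rpow_add_one h1.ne']
    have e2 : (1 + x) ^ (β + 1) = (1 + x) ^ β * (1 + x) := by
      rw [Real.rpow_add_one h2.ne']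
    have eD : D.eval x = (β - α - (α + β + 2) * x) * Cp.eval x +
        (1 - x ^ 2) * (derivative Cp).eval x := by
      simp only [hD, hCp, jacobiOp]
      simp only [Polynomial.eval_sub, Polynomial.eval_add, Polynomial.eval_mul,
        Polynomial.eval_pow, Polynomial.eval_one, Polynomial.eval_C, Polynomial.eval_X,
        Polynomial.derivative_sub, Polynomial.derivative_mul]
      ring
    simp only [hg, eD, e1, e2, Pi.mul_apply]
    ring
  have htendsto1 : Tendsto G (𝓝[<] (1:ℝ)) (𝓝 0) := by
    have hb : Tendsto (fun y : ℝ => 1 - y) (𝓝[<] (1:ℝ)) (𝓝 0) := by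
      have hcont : Continuous (fun y : ℝ => 1 - y) := continuous_const.sub continuous_id
      have : Tendsto (fun y : ℝ => 1 - y) (𝓝 (1:ℝ)) (𝓝 0) := by
        simpa using hcont.tendsto 1
      exact this.mono_left nhdsWithin_le_nhds
    have hr : Tendsto (fun t : ℝ => t ^ (α + 1)) (𝓝 (0:ℝ)) (𝓝 0) := by
      have hc := Real.continuousAt_rpow_const 0 (α + 1) (Or.inr (by linarith))
      have h0 : (0:ℝ) ^ (α + 1) = 0 := Real.zero_rpow (by linarith)
      simpa [ContinuousAt, h0] using hc
    have h1 : Tendsto (fun y : ℝ => (1 - y) ^ (α + 1)) (𝓝[<] (1:ℝ)) (𝓝 0) := hr.comp hb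
    have h2 : Tendsto (fun y : ℝ => (1 + y) ^ (β + 1) * Cp.eval y) (𝓝[<] (1:ℝ))
        (𝓝 (((1:ℝ) + 1) ^ (β + 1) * Cp.eval 1)) := by
      have hc : ContinuousAt (fun y : ℝ => (1 + y) ^ (β + 1) * Cp.eval y) 1 := by
        refine ContinuousAt.mul ?_ (Cp.continuous_aeval.continuousAt)
        refine ContinuousAt.rpow_const ?_ (Or.inl (by norm_num))
        exact (continuous_const.add continuous_id).continuousAt
      exact hc.tendsto.mono_left nhdsWithin_le_nhds
    have h3 : Tendsto G (𝓝[<] (1:ℝ)) (𝓝 (0 * (((1:ℝ) + 1) ^ (β + 1) * Cp.eval 1))) :=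
      Tendsto.congr (fun y => by simp only [hG]; ring) (h1.mul h2)
    simpa using h3
  have htendsto2 : Tendsto G (𝓝[>] (-1:ℝ)) (𝓝 0) := by
    have hb : Tendsto (fun y : ℝ => 1 + y) (𝓝[>] (-1:ℝ)) (𝓝 0) := by
      have hcont : Continuous (fun y : ℝ => 1 + y) := continuous_const.add continuous_id
      have : Tendsto (fun y : ℝ => 1 + y) (𝓝 (-1:ℝ)) (𝓝 0) := by
        simpa using hcont.tendsto (-1)
      exact this.mono_left nhdsWithin_le_nhds
    have hr : Tendsto (fun t : ℝ => t ^ (β + 1)) (𝓝 (0:ℝ)) (𝓝 0) := by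
      have hc := Real.continuousAt_rpow_const 0 (β + 1) (Or.inr (by linarith))
      have h0 : (0:ℝ) ^ (β + 1) = 0 := Real.zero_rpow (by linarith)
      simpa [ContinuousAt, h0] using hc
    have h1 : Tendsto (fun y : ℝ => (1 + y) ^ (β + 1)) (𝓝[>] (-1:ℝ)) (𝓝 0) := hr.comp hb
    have h2 : Tendsto (fun y : ℝ => (1 - y) ^ (α + 1) * Cp.eval y) (𝓝[>] (-1:ℝ))
        (𝓝 ((1 - (-1:ℝ)) ^ (α + 1) * Cp.eval (-1))) := by
      have hc : ContinuousAt (fun y : ℝ => (1 - y) ^ (α + 1) * Cp.eval y) (-1) := by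
        refine ContinuousAt.mul ?_ (Cp.continuous_aeval.continuousAt)
        refine ContinuousAt.rpow_const ?_ (Or.inl (by norm_num))
        exact (continuous_const.sub continuous_id).continuousAt
      exact hc.tendsto.mono_left nhdsWithin_le_nhds
    have h3 : Tendsto G (𝓝[>] (-1:ℝ))
        (𝓝 ((1 - (-1:ℝ)) ^ (α + 1) * Cp.eval (-1) * 0)) :=
      Tendsto.congr (fun y => by simp only [hG]; ring) (h2.mul h1)
    simpa using h3
  have hint : IntegrableOn g (Set.Ioo (-1:ℝ) 1) := by
    have := jacobi_int α β hα hβ D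
    exact this
  have hii : IntervalIntegrable g volume (-1 : ℝ) 1 := by
    rw [intervalIntegrable_iff_integrableOn_Ioo_of_le (by norm_num)]
    exact hint
  have hFTC := intervalIntegral.integral_eq_sub_of_hasDerivAt_of_tendsto
    (by norm_num : (-1:ℝ) < 1) hderiv hii htendsto2 htendsto1
  rw [sub_zero] at hFTC
  have : ∫ x in Set.Ioo (-1:ℝ) 1, g x = 0 := by
    rw [← MeasureTheory.integral_Ioc_eq_integral_Ioo]
    rw [← intervalIntegral.integral_of_le (by norm_num : (-1:ℝ) ≤ 1)]
    simpa using hFTC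
  rw [← this]
  refine setIntegral_congr_fun measurableSet_Ioo (fun x hx => ?_)
  simp only [hg, hD, Polynomial.eval_sub, Polynomial.eval_mul]

lemma jacobiOp_expand (α β : ℝ) (A : Polynomial ℝ) :
    jacobiOp α β A = (derivative (derivative A) - X ^ 2 * derivative (derivative A)) +
      (C (β - α) * derivative A - C (α + β + 2) * (X ^ 1 * derivative A)) := by
  rw [jacobiOp]; ring

lemma jacobiOp_coeff (α β : ℝ) (A : Polynomial ℝ) (n : ℕ) (hn : A.natDegree < n) :
    (jacobiOp α β A).coeff n = 0 := by
  have hA : ∀ m, A.natDegree < m → A.coeff m = 0 := fun m hm =>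
    coeff_eq_zero_of_natDegree_lt hm
  rw [jacobiOp_expand]
  simp only [coeff_add, coeff_sub, coeff_C_mul, coeff_X_pow_mul', coeff_derivative]
  split_ifs with h1 h2
  · rcases Nat.exists_eq_add_of_le h1 with ⟨m, rfl⟩
    have e2 : 2 + m - 2 = m := by omega
    have e1 : 2 + m - 1 = m + 1 := by omega
    rw [e1, e2, hA (2 + m + 1 + 1) (by omega), hA (2 + m + 1) (by omega),
      hA (m + 1 + 1) (by omega)]
    ring
  · exfalso; omega
  · -- n = 0 or n = 1; 2 ≤ n false, 1 ≤ n true means n = 1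
    rw [hA (n + 1 + 1) (by omega), hA (n + 1) (by omega),
      show n - 1 + 1 = n from by omega, hA n (by omega)]
    ring
  · rw [hA (n + 1 + 1) (by omega), hA (n + 1) (by omega)]
    ring

lemma jacobiOp_natDegree_le (α β : ℝ) (A : Polynomial ℝ) :
    (jacobiOp α β A).natDegree ≤ A.natDegree :=
  natDegree_le_iff_coeff_eq_zero.2 fun n hn => jacobiOp_coeff α β A n hn

lemma jacobi_ode (N : ℕ) (hN : 1 ≤ N) (α β : ℝ) (hα : -1 < α) (hβ : -1 < β)
    (P : Polynomial ℝ) (hPdeg : P.natDegree = N)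
    (hPorth : ∀ Q : Polynomial ℝ, Q.natDegree < N →
      ∫ x in Set.Ioo (-1 : ℝ) 1,
        P.eval x * Q.eval x * (1 - x) ^ α * (1 + x) ^ β = 0) :
    jacobiOp α β P + C ((N : ℝ) * ((N : ℝ) + α + β + 1)) * P = 0 := by
  set c : ℝ := (N : ℝ) * ((N : ℝ) + α + β + 1) with hc
  set R : Polynomial ℝ := jacobiOp α β P + C c * P with hR
  have hA : ∀ m, N < m → P.coeff m = 0 := fun m hm =>
    coeff_eq_zero_of_natDegree_lt (hPdeg ▸ hm)
  have hcoeffN : R.coeff N = 0 := by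
    rw [hR, jacobiOp_expand]
    simp only [coeff_add, coeff_sub, coeff_C_mul, coeff_X_pow_mul', coeff_derivative]
    rcases Nat.lt_or_ge N 2 with h2 | h2
    · -- N = 1
      have hN1 : N = 1 := by omega
      subst hN1
      norm_num
      rw [hA 3 (by omega), hA 2 (by omega)]
      push_cast
      ring
    · rcases Nat.exists_eq_add_of_le h2 with ⟨m, rfl⟩
      have e2 : 2 + m - 2 = m := by omega
      have e1 : 2 + m - 1 = m + 1 := by omega
      rw [if_pos (by omega : 2 ≤ 2 + m), if_pos (by omega : 1 ≤ 2 + m), e1, e2,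
        hA (2 + m + 1 + 1) (by omega), hA (2 + m + 1) (by omega),
        show m + 1 + 1 = 2 + m from by omega]
      have ecast : ((2 + m : ℕ) : ℝ) = (m : ℝ) + 2 := by push_cast; ring
      rw [hc, ecast]
      push_cast
      ring
  have hdegle : R.natDegree ≤ N := by
    refine le_trans (natDegree_add_le _ _) (max_le ?_ ?_)
    · exact le_trans (jacobiOp_natDegree_le α β P) hPdeg.le
    · exact le_trans (natDegree_C_mul_le _ _) hPdeg.le
  have hdeg : R.natDegree < N := by
    rcases lt_or_eq_of_le hdegle with h | h
    · exact h
    · by_cases h0 : R = 0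
      · rw [h0] at h; simp at h; omega
      · exfalso
        have := Polynomial.leadingCoeff_ne_zero.2 h0
        rw [Polynomial.leadingCoeff, h, hcoeffN] at this
        exact this rfl
  have horth : ∀ Q : Polynomial ℝ, Q.natDegree < N →
      ∫ x in Set.Ioo (-1:ℝ) 1, R.eval x * Q.eval x * (1 - x) ^ α * (1 + x) ^ β = 0 := by
    intro Q hQ
    have hFint : IntegrableOn
        (fun x => (jacobiOp α β P).eval x * Q.eval x * (1 - x) ^ α * (1 + x) ^ β)
        (Set.Ioo (-1:ℝ) 1) :=
      (jacobi_int α β hα hβ (jacobiOp α β P * Q)).congr_fun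
        (fun x _ => by simp [Polynomial.eval_mul]) measurableSet_Ioo
    have hGint : IntegrableOn
        (fun x => P.eval x * (jacobiOp α β Q).eval x * (1 - x) ^ α * (1 + x) ^ β)
        (Set.Ioo (-1:ℝ) 1) :=
      (jacobi_int α β hα hβ (P * jacobiOp α β Q)).congr_fun
        (fun x _ => by simp [Polynomial.eval_mul]) measurableSet_Ioo
    have hPQint : IntegrableOn
        (fun x => P.eval x * Q.eval x * (1 - x) ^ α * (1 + x) ^ β)
        (Set.Ioo (-1:ℝ) 1) :=
      (jacobi_int α β hα hβ (P * Q)).congr_fun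
        (fun x _ => by simp [Polynomial.eval_mul]) measurableSet_Ioo
    have h0 := jacobi_ibp α β hα hβ P Q
    have hsub : ∫ x in Set.Ioo (-1:ℝ) 1,
        ((jacobiOp α β P).eval x * Q.eval x * (1 - x) ^ α * (1 + x) ^ β -
          P.eval x * (jacobiOp α β Q).eval x * (1 - x) ^ α * (1 + x) ^ β) = 0 := by
      rw [← h0]
      refine setIntegral_congr_fun measurableSet_Ioo (fun x hx => ?_)
      ring
    rw [integral_sub hFint hGint, sub_eq_zero] at hsub
    have hG0 : ∫ x in Set.Ioo (-1:ℝ) 1,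
        P.eval x * (jacobiOp α β Q).eval x * (1 - x) ^ α * (1 + x) ^ β = 0 :=
      hPorth (jacobiOp α β Q) (lt_of_le_of_lt (jacobiOp_natDegree_le α β Q) hQ)
    have hsplit : ∫ x in Set.Ioo (-1:ℝ) 1,
        R.eval x * Q.eval x * (1 - x) ^ α * (1 + x) ^ β =
        (∫ x in Set.Ioo (-1:ℝ) 1,
          (jacobiOp α β P).eval x * Q.eval x * (1 - x) ^ α * (1 + x) ^ β) +
        c * ∫ x in Set.Ioo (-1:ℝ) 1,
          P.eval x * Q.eval x * (1 - x) ^ α * (1 + x) ^ β := by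
      rw [← integral_const_mul, ← integral_add hFint (hPQint.const_mul c)]
      refine setIntegral_congr_fun measurableSet_Ioo (fun x hx => ?_)
      simp only [hR, Polynomial.eval_add, Polynomial.eval_mul, Polynomial.eval_C]
      ring
    rw [hsplit, hsub, hG0, hPorth Q hQ]
    ring
  have hRR := horth R hdeg
  exact jacobi_vanish α β hα hβ R hRR

lemma jacobi_star (N : ℕ) (hN : 1 ≤ N) (α β : ℝ) (hα : -1 < α) (hβ : -1 < β)
    (P : Polynomial ℝ) (hPdeg : P.natDegree = N)
    (hPorth : ∀ Q : Polynomial ℝ, Q.natDegree < N →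
      ∫ x in Set.Ioo (-1 : ℝ) 1,
        P.eval x * Q.eval x * (1 - x) ^ α * (1 + x) ^ β = 0)
    (z : Fin N → ℝ) (hzinj : Function.Injective z)
    (hzroot : ∀ i, P.eval (z i) = 0) (i : Fin N) :
    2 * (1 - z i ^ 2) * (∑ l ∈ Finset.univ.erase i, (z i - z l)⁻¹) =
      (α + β + 2) * z i + α - β := by
  classical
  have hzne : ∀ l ∈ Finset.univ.erase i, z i - z l ≠ 0 := by
    intro l hl
    have : l ≠ i := (Finset.mem_erase.1 hl).1
    exact sub_ne_zero.2 fun h => this (hzinj h.symm)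
  -- P is nonzero
  have hP0 : P ≠ 0 := fun h => by simp [h] at hPdeg; omega
  set c0 : ℝ := P.leadingCoeff with hc0def
  have hc0 : c0 ≠ 0 := Polynomial.leadingCoeff_ne_zero.2 hP0
  set Pi : Polynomial ℝ := ∏ j : Fin N, (X - C (z j)) with hPi
  have hmonic : Pi.Monic := monic_prod_of_monic _ _ fun j _ => monic_X_sub_C _
  have hPideg : Pi.natDegree = N := by
    rw [hPi, natDegree_prod_of_monic _ _ fun j _ => monic_X_sub_C _]
    simp [natDegree_X_sub_C]
  -- factorization
  have hfact : P = C c0 * Pi := by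
    set D : Polynomial ℝ := P - C c0 * Pi with hD
    have hDcoeff : D.coeff N = 0 := by
      rw [hD, coeff_sub, coeff_C_mul]
      have h1 : P.coeff N = c0 := by rw [hc0def, Polynomial.leadingCoeff, hPdeg]
      have h2 : Pi.coeff N = 1 := by
        have := hmonic.coeff_natDegree
        rwa [hPideg] at this
      rw [h1, h2, mul_one, sub_self]
    have hDdegle : D.natDegree ≤ N := by
      refine le_trans (natDegree_sub_le _ _) (max_le hPdeg.le ?_)
      exact le_trans (natDegree_C_mul_le _ _) hPideg.le
    have hDdeg : D.natDegree < N := by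
      rcases lt_or_eq_of_le hDdegle with h | h
      · exact h
      · by_cases h0 : D = 0
        · rw [h0] at h; simp at h; omega
        · exfalso
          have := Polynomial.leadingCoeff_ne_zero.2 h0
          rw [Polynomial.leadingCoeff, h, hDcoeff] at this
          exact this rfl
    have hDroot : ∀ j, D.eval (z j) = 0 := by
      intro j
      rw [hD]
      simp only [Polynomial.eval_sub, Polynomial.eval_mul, Polynomial.eval_C, hzroot j]
      have : Pi.eval (z j) = 0 := by
        rw [hPi, Polynomial.eval_prod]
        exact Finset.prod_eq_zero (Finset.mem_univ j) (by simp)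
      rw [this]; ring
    have hD0 : D = 0 := by
      refine Polynomial.eq_zero_of_natDegree_lt_card_of_eval_eq_zero D hzinj hDroot ?_
      simpa using hDdeg
    exact sub_eq_zero.1 hD0
  -- local factor at i
  set Qi : Polynomial ℝ := C c0 * ∏ l ∈ Finset.univ.erase i, (X - C (z l)) with hQi
  have hPQ : P = (X - C (z i)) * Qi := by
    rw [hfact, hQi, hPi, ← Finset.mul_prod_erase Finset.univ _ (Finset.mem_univ i)]
    ring
  -- derivative evaluations
  have hP' : derivative P = Qi + (X - C (z i)) * derivative Qi := by
    rw [hPQ, derivative_mul]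
    simp
  have hP'e : (derivative P).eval (z i) = Qi.eval (z i) := by
    rw [hP']
    simp
  have hP''e : (derivative (derivative P)).eval (z i) = 2 * (derivative Qi).eval (z i) := by
    rw [hP', derivative_add, derivative_mul]
    simp
    ring
  -- the ODE at z i
  have hODE := jacobi_ode N hN α β hα hβ P hPdeg hPorth
  have hODEi : (1 - z i ^ 2) * (2 * (derivative Qi).eval (z i)) +
      (β - α - (α + β + 2) * z i) * Qi.eval (z i) = 0 := by
    have := congrArg (Polynomial.eval (z i)) hODE
    simp only [Polynomial.eval_add, Polynomial.eval_mul, Polynomial.eval_sub,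
      Polynomial.eval_one, Polynomial.eval_pow, Polynomial.eval_X, Polynomial.eval_C,
      Polynomial.eval_zero, jacobiOp, hzroot i, hP'e, hP''e] at this
    linarith [this]
  -- evaluate Qi and Qi'
  set pri : ℝ := ∏ l ∈ Finset.univ.erase i, (z i - z l) with hpri
  have hprine : pri ≠ 0 := Finset.prod_ne_zero_iff.2 hzne
  have hQie : Qi.eval (z i) = c0 * pri := by
    rw [hQi, hpri]
    simp [Polynomial.eval_prod]
  have hQi'e : (derivative Qi).eval (z i) =
      c0 * ∑ l ∈ Finset.univ.erase i, (z i - z l)⁻¹ * pri := by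
    have hd : derivative (∏ l ∈ Finset.univ.erase i, (X - C (z l))) =
        ∑ l ∈ Finset.univ.erase i, (∏ m ∈ (Finset.univ.erase i).erase l, (X - C (z m))) *
          derivative (X - C (z l)) := Polynomial.derivative_prod
    rw [hQi, derivative_C_mul, hd]
    rw [Polynomial.eval_mul, Polynomial.eval_C, eval_finset_sum]
    congr 1
    refine Finset.sum_congr rfl fun l hl => ?_
    have hne := hzne l hl
    have hkey : (z i - z l) * ∏ m ∈ (Finset.univ.erase i).erase l, (z i - z m) = pri := by
      rw [hpri, ← Finset.mul_prod_erase _ _ hl]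
    rw [Polynomial.eval_mul]
    have e1 : eval (z i) (∏ m ∈ (Finset.univ.erase i).erase l, (X - C (z m))) =
        ∏ m ∈ (Finset.univ.erase i).erase l, (z i - z m) := by
      rw [Polynomial.eval_prod]
      exact Finset.prod_congr rfl fun m _ => by simp
    have e2 : eval (z i) (derivative (X - C (z l))) = 1 := by simp
    rw [e1, e2, mul_one, ← hkey, inv_mul_eq_div, mul_comm (z i - z l), mul_div_assoc,
      div_self hne, mul_one]
  rw [hQie, hQi'e] at hODEi
  rw [← Finset.sum_mul] at hODEi
  have hODEi' : (c0 * pri) * ((1 - z i ^ 2) * 2 *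
      (∑ l ∈ Finset.univ.erase i, (z i - z l)⁻¹) + (β - α - (α + β + 2) * z i)) = 0 := by
    linear_combination hODEi
  rcases mul_eq_zero.1 hODEi' with h | h
  · exact absurd h (mul_ne_zero hc0 hprine)
  · linear_combination h


end JacobiAux

theorem trig_jacobi_matrix_first_eigenvector
    (N : ℕ) (hN : 1 ≤ N) (α β : ℝ) (hα : -1 < α) (hβ : -1 < β)
    (P : Polynomial ℝ) (hPdeg : P.natDegree = N)
    (hPorth : ∀ Q : Polynomial ℝ, Q.natDegree < N →
      ∫ x in Set.Ioo (-1 : ℝ) 1,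
        P.eval x * Q.eval x * (1 - x) ^ α * (1 + x) ^ β = 0)
    (hPone : P.eval 1 = (∏ j ∈ Finset.range N, (α + 1 + j)) / (N.factorial : ℝ))
    (z : Fin N → ℝ) (hzmono : StrictMono z)
    (hzroot : ∀ i, P.eval (z i) = 0)
    (hzmem : ∀ i, z i ∈ Set.Ioo (-1 : ℝ) 1)
    (S : Matrix (Fin N) (Fin N) ℝ)
    (hS : S = Matrix.of fun i j =>
      if i = j then
        4 * (∑ l ∈ Finset.univ.erase j, (1 - z j ^ 2) / (z j - z l) ^ 2) +
          2 * (α + 1) * ((1 + z j) / (1 - z j)) + 2 * (β + 1) * ((1 - z j) / (1 + z j))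
      else -4 * Real.sqrt ((1 - z i ^ 2) * (1 - z j ^ 2)) / (z i - z j) ^ 2)
    : S.mulVec (fun i => Real.sqrt (1 - z i ^ 2)) =
      (2 * (2 * (N : ℝ) + α + β)) • fun i => Real.sqrt (1 - z i ^ 2) := by
  classical
  have hzsq : ∀ i, 0 < 1 - z i ^ 2 := by
    intro i
    have h := hzmem i
    nlinarith [h.1, h.2]
  have h1m : ∀ i : Fin N, (1:ℝ) - z i ≠ 0 := fun i => by
    have := (hzmem i).2; intro h; rw [sub_eq_zero] at h; exact absurd h.symm (ne_of_lt this)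
  have h1p : ∀ i : Fin N, (1:ℝ) + z i ≠ 0 := fun i => by
    have := (hzmem i).1; intro h; nlinarith [this]
  have hzne : ∀ i, ∀ l ∈ Finset.univ.erase i, z i - z l ≠ 0 := by
    intro i l hl
    have : l ≠ i := (Finset.mem_erase.1 hl).1
    exact sub_ne_zero.2 fun h => this (hzmono.injective h.symm)
  have hstar := fun i => jacobi_star N hN α β hα hβ P hPdeg hPorth z hzmono.injective hzroot i
  funext i
  simp only [Matrix.mulVec, dotProduct, Pi.smul_apply, smul_eq_mul, hS, Matrix.of_apply]
  rw [← Finset.add_sum_erase _ _ (Finset.mem_univ i)]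
  rw [if_pos rfl]
  have hsum : ∑ j ∈ Finset.univ.erase i,
      (if i = j then
        4 * (∑ l ∈ Finset.univ.erase j, (1 - z j ^ 2) / (z j - z l) ^ 2) +
          2 * (α + 1) * ((1 + z j) / (1 - z j)) + 2 * (β + 1) * ((1 - z j) / (1 + z j))
      else -4 * Real.sqrt ((1 - z i ^ 2) * (1 - z j ^ 2)) / (z i - z j) ^ 2) *
        Real.sqrt (1 - z j ^ 2) =
      Real.sqrt (1 - z i ^ 2) *
        ∑ j ∈ Finset.univ.erase i, (-4) * (1 - z j ^ 2) / (z i - z j) ^ 2 := by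
    rw [Finset.mul_sum]
    refine Finset.sum_congr rfl fun j hj => ?_
    rw [if_neg (fun h => (Finset.mem_erase.1 hj).1 h.symm)]
    rw [Real.sqrt_mul (hzsq i).le]
    have hmm : Real.sqrt (1 - z j ^ 2) * Real.sqrt (1 - z j ^ 2) = 1 - z j ^ 2 :=
      Real.mul_self_sqrt (hzsq j).le
    have hstep : (-4 * (Real.sqrt (1 - z i ^ 2) * Real.sqrt (1 - z j ^ 2))) *
        Real.sqrt (1 - z j ^ 2) = Real.sqrt (1 - z i ^ 2) * (-4 * (1 - z j ^ 2)) := by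
      linear_combination (-4 * Real.sqrt (1 - z i ^ 2)) * hmm
    calc (-4 * (Real.sqrt (1 - z i ^ 2) * Real.sqrt (1 - z j ^ 2)) / (z i - z j) ^ 2) *
          Real.sqrt (1 - z j ^ 2)
        = ((-4 * (Real.sqrt (1 - z i ^ 2) * Real.sqrt (1 - z j ^ 2))) *
            Real.sqrt (1 - z j ^ 2)) / (z i - z j) ^ 2 := by ring
      _ = (Real.sqrt (1 - z i ^ 2) * (-4 * (1 - z j ^ 2))) / (z i - z j) ^ 2 := by rw [hstep]
      _ = Real.sqrt (1 - z i ^ 2) * ((-4) * (1 - z j ^ 2) / (z i - z j) ^ 2) := by ring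
  rw [hsum]
  have hcard : ((Finset.univ.erase i).card : ℝ) = (N : ℝ) - 1 := by
    rw [Finset.card_erase_of_mem (Finset.mem_univ i), Finset.card_univ, Fintype.card_fin]
    rw [Nat.cast_sub hN]
    norm_num
  have hkey : (4 * (∑ l ∈ Finset.univ.erase i, (1 - z i ^ 2) / (z i - z l) ^ 2) +
        2 * (α + 1) * ((1 + z i) / (1 - z i)) + 2 * (β + 1) * ((1 - z i) / (1 + z i))) +
      (∑ j ∈ Finset.univ.erase i, (-4) * (1 - z j ^ 2) / (z i - z j) ^ 2) =
      2 * (2 * (N : ℝ) + α + β) := by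
    have hcomb : 4 * (∑ l ∈ Finset.univ.erase i, (1 - z i ^ 2) / (z i - z l) ^ 2) +
        (∑ j ∈ Finset.univ.erase i, (-4) * (1 - z j ^ 2) / (z i - z j) ^ 2) =
        4 * ((N : ℝ) - 1) -
          8 * z i * ∑ l ∈ Finset.univ.erase i, (z i - z l)⁻¹ := by
      rw [Finset.mul_sum, ← Finset.sum_add_distrib]
      have : ∀ l ∈ Finset.univ.erase i,
          4 * ((1 - z i ^ 2) / (z i - z l) ^ 2) + (-4) * (1 - z l ^ 2) / (z i - z l) ^ 2 =
          4 - 8 * z i * (z i - z l)⁻¹ := by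
        intro l hl
        have hd := hzne i l hl
        field_simp
        ring
      rw [Finset.sum_congr rfl this, Finset.sum_sub_distrib, Finset.sum_const,
        ← Finset.mul_sum, nsmul_eq_mul, hcard]
      ring
    have hs := hstar i
    have h1 := h1m i
    have h2 := h1p i
    set s : ℝ := ∑ l ∈ Finset.univ.erase i, (z i - z l)⁻¹ with hsdef
    have hrest : 4 * ((N : ℝ) - 1) -
        8 * z i * s +
        2 * (α + 1) * ((1 + z i) / (1 - z i)) + 2 * (β + 1) * ((1 - z i) / (1 + z i)) =
        2 * (2 * (N : ℝ) + α + β) := by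
      field_simp
      linear_combination (-4 * z i) * hs
    linear_combination hcomb + hrest
  linear_combination (Real.sqrt (1 - z i ^ 2)) * hkey
end

section
/- Let N ≥ 1 and let z_1 < ... < z_N be the ordered zeros of the physicists' Hermite polynomial H_N. Let S^H be the N×N matrix with entries s^H_{i,i} = 1 + Σ_{l≠i} 1/(z_i−z_l)² and s^H_{i,j} = −1/(z_i−z_j)² for i ≠ j. Then det(S^H) = N!. -/
open MeasureTheory Filter Real Finset Topology
open Polynomial


lemma integ_pow (k : ℕ) : Integrable (fun x : ℝ => x ^ k * Real.exp (-x ^ 2)) := by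
  have h := integrable_rpow_mul_exp_neg_mul_sq (b := 1) one_pos
    (s := (k : ℝ)) (lt_of_lt_of_le neg_one_lt_zero (Nat.cast_nonneg k))
  simp_rw [Real.rpow_natCast, neg_one_mul] at h
  exact h

lemma integ_poly (F : Polynomial ℝ) :
    Integrable (fun x : ℝ => F.eval x * Real.exp (-x ^ 2)) := by
  have h : (fun x : ℝ => F.eval x * Real.exp (-x ^ 2)) =
      fun x => ∑ k ∈ Finset.range (F.natDegree + 1),
        F.coeff k * (x ^ k * Real.exp (-x ^ 2)) := by
    funext x
    rw [Polynomial.eval_eq_sum_range, Finset.sum_mul]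
    simp [mul_assoc]
  rw [h]
  exact integrable_finset_sum _ fun k _ => (integ_pow k).const_mul _

lemma ftc_poly (F : Polynomial ℝ) :
    ∫ x : ℝ, (F.derivative.eval x - 2 * x * F.eval x) * Real.exp (-x ^ 2) = 0 := by
  have hderiv : ∀ x : ℝ, HasDerivAt (fun x => F.eval x * Real.exp (-x ^ 2))
      ((F.derivative.eval x - 2 * x * F.eval x) * Real.exp (-x ^ 2)) x := by
    intro x
    have h1 : HasDerivAt (fun x : ℝ => F.eval x) (F.derivative.eval x) x :=
      F.hasDerivAt x
    have h2 : HasDerivAt (fun x : ℝ => -x ^ 2) (-(2 * x)) x := by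
      simpa using (hasDerivAt_pow 2 x).fun_neg
    have h3 := h2.exp
    have := h1.fun_mul h3
    refine this.congr_deriv ?_
    ring
  have hint : Integrable (fun x : ℝ =>
      (F.derivative.eval x - 2 * x * F.eval x) * Real.exp (-x ^ 2)) := by
    have h : (fun x : ℝ => (F.derivative.eval x - 2 * x * F.eval x) * Real.exp (-x ^ 2)) =
        fun x => (F.derivative - Polynomial.C 2 * Polynomial.X * F).eval x
          * Real.exp (-x ^ 2) := by
      funext x; simp only [eval_sub, eval_mul, eval_C, eval_X]
    rw [h]; exact integ_poly _
  exact integral_eq_zero_of_hasDerivAt_of_integrable hderiv hint (integ_poly F)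


lemma geom_aux (x y : ℝ) (m : ℕ) :
    (m : ℝ) * x ^ (m - 1) - ∑ a ∈ range m, x ^ a * y ^ (m - 1 - a) =
    (∑ a ∈ range m, ∑ b ∈ range (m - 1 - a), x ^ (a + b) * y ^ (m - 2 - a - b)) * (x - y) := by
  have h1 : (m : ℝ) * x ^ (m - 1) = ∑ _a ∈ range m, x ^ (m - 1) := by
    simp [mul_comm]
  rw [h1, ← Finset.sum_sub_distrib, Finset.sum_mul]
  refine Finset.sum_congr rfl fun a ha => ?_
  have ham : a < m := Finset.mem_range.mp ha
  have hxa : x ^ (m - 1) = x ^ a * x ^ (m - 1 - a) := by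
    rw [← pow_add]; congr 1; omega
  rw [hxa, ← mul_sub, ← geom_sum₂_mul x y (m - 1 - a), ← mul_assoc, Finset.mul_sum,
    Finset.sum_mul, Finset.sum_mul]
  refine Finset.sum_congr rfl fun b hb => ?_
  have hbm : b < m - 1 - a := Finset.mem_range.mp hb
  rw [show m - 1 - a - 1 - b = m - 2 - a - b from by omega]
  rw [pow_add]
  ring

lemma core_identity {N : ℕ} (z : Fin N → ℝ) (hzinj : Function.Injective z) (i : Fin N)
    (hz1 : ∑ l ∈ Finset.univ.erase i, (z i - z l)⁻¹ = z i) (m : ℕ) :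
    z i ^ m + ∑ l ∈ Finset.univ.erase i, (z i ^ m - z l ^ m) / (z i - z l) ^ 2 =
    (m + 1 : ℝ) * z i ^ m +
      (∑ a ∈ range m, ∑ b ∈ range (m - 1 - a),
        ((X : Polynomial ℝ) ^ (m - 2) -
          C (∑ l, z l ^ (m - 2 - a - b)) * X ^ (a + b))).eval (z i) := by
  rcases Nat.eq_zero_or_pos m with hm | hm
  · simp [hm]
  -- step 1: rewrite each term
  have step1 : ∀ l ∈ Finset.univ.erase i,
      (z i ^ m - z l ^ m) / (z i - z l) ^ 2 =
      (m : ℝ) * z i ^ (m - 1) * (z i - z l)⁻¹ -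
        ∑ a ∈ range m, ∑ b ∈ range (m - 1 - a),
          z i ^ (a + b) * z l ^ (m - 2 - a - b) := by
    intro l hl
    have hne : z i ≠ z l := fun h => Finset.ne_of_mem_erase hl (hzinj h.symm)
    have hd : z i - z l ≠ 0 := sub_ne_zero.mpr hne
    set E : ℝ := ∑ a ∈ range m, ∑ b ∈ range (m - 1 - a),
      z i ^ (a + b) * z l ^ (m - 2 - a - b) with hE
    have g1 := geom_sum₂_mul (z i) (z l) m
    have g2 := geom_aux (z i) (z l) m
    rw [← hE] at g2
    have key : z i ^ m - z l ^ m =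
        (m : ℝ) * z i ^ (m - 1) * (z i - z l) - E * (z i - z l) ^ 2 := by
      linear_combination (-1 : ℝ) * g1 - (z i - z l) * g2
    rw [key]
    field_simp
  rw [Finset.sum_congr rfl step1, Finset.sum_sub_distrib, ← Finset.mul_sum, hz1]
  have hzz : (m : ℝ) * z i ^ (m - 1) * z i = m * z i ^ m := by
    rw [mul_assoc, ← pow_succ]
    congr 2
    omega
  rw [hzz]
  -- step 3/4: remaining sums
  have step3 : ∑ l ∈ Finset.univ.erase i, ∑ a ∈ range m, ∑ b ∈ range (m - 1 - a),
      z i ^ (a + b) * z l ^ (m - 2 - a - b) =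
      ∑ a ∈ range m, ∑ b ∈ range (m - 1 - a),
        z i ^ (a + b) * ((∑ l, z l ^ (m - 2 - a - b)) - z i ^ (m - 2 - a - b)) := by
    rw [Finset.sum_comm]
    refine Finset.sum_congr rfl fun a ha => ?_
    rw [Finset.sum_comm]
    refine Finset.sum_congr rfl fun b hb => ?_
    rw [← Finset.mul_sum, Finset.sum_erase_eq_sub (Finset.mem_univ i)]
  rw [step3]
  have step4 : (∑ a ∈ range m, ∑ b ∈ range (m - 1 - a),
      ((X : Polynomial ℝ) ^ (m - 2) -
        C (∑ l, z l ^ (m - 2 - a - b)) * X ^ (a + b))).eval (z i) =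
      ∑ a ∈ range m, ∑ b ∈ range (m - 1 - a),
        (z i ^ (m - 2) - (∑ l, z l ^ (m - 2 - a - b)) * z i ^ (a + b)) := by
    simp [eval_finset_sum]
  rw [step4]
  have step5 : ∑ a ∈ range m, ∑ b ∈ range (m - 1 - a),
      z i ^ (a + b) * ((∑ l, z l ^ (m - 2 - a - b)) - z i ^ (m - 2 - a - b)) =
      -∑ a ∈ range m, ∑ b ∈ range (m - 1 - a),
        (z i ^ (m - 2) - (∑ l, z l ^ (m - 2 - a - b)) * z i ^ (a + b)) := by
    rw [← Finset.sum_neg_distrib]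
    refine Finset.sum_congr rfl fun a ha => ?_
    rw [← Finset.sum_neg_distrib]
    refine Finset.sum_congr rfl fun b hb => ?_
    have hab : a + b + (m - 2 - a - b) = m - 2 := by
      have := Finset.mem_range.mp ha
      have := Finset.mem_range.mp hb
      omega
    rw [mul_sub, ← pow_add, hab]
    ring
  rw [step5]
  ring

lemma integ_form (F : Polynomial ℝ) :
    Integrable (fun x : ℝ =>
      (F.derivative.eval x - 2 * x * F.eval x) * Real.exp (-x ^ 2)) := by
  have h : (fun x : ℝ => (F.derivative.eval x - 2 * x * F.eval x) * Real.exp (-x ^ 2)) =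
      fun x => (F.derivative - Polynomial.C 2 * Polynomial.X * F).eval x
        * Real.exp (-x ^ 2) := by
    funext x; simp only [eval_sub, eval_mul, eval_C, eval_X]
  rw [h]; exact integ_poly _

lemma hermite_ode (N : ℕ) (hN : 1 ≤ N) (H : Polynomial ℝ) (hHdeg : H.natDegree = N)
    (hHlead : H.leadingCoeff = 2 ^ N)
    (hHorth : ∀ Q : Polynomial ℝ, Q.natDegree < N →
      ∫ x : ℝ, H.eval x * Q.eval x * Real.exp (-x ^ 2) = 0) :
    H.derivative.derivative - C 2 * X * H.derivative + C (2 * (N : ℝ)) * H = 0 := by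
  set D : Polynomial ℝ :=
    H.derivative.derivative - C 2 * X * H.derivative + C (2 * (N : ℝ)) * H with hD
  have hDcoeff : ∀ k : ℕ, N ≤ k → D.coeff k = 0 := by
    intro k hk
    obtain ⟨k', rfl⟩ : ∃ k', k = k' + 1 := ⟨k - 1, by omega⟩
    rw [hD]
    rw [Polynomial.coeff_add, Polynomial.coeff_sub, mul_assoc, Polynomial.coeff_C_mul,
      Polynomial.coeff_X_mul, Polynomial.coeff_C_mul, Polynomial.coeff_derivative,
      Polynomial.coeff_derivative, Polynomial.coeff_derivative]
    have h3 : H.coeff (k' + 1 + 1 + 1) = 0 :=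
      Polynomial.coeff_eq_zero_of_natDegree_lt (by omega)
    rw [h3]
    rcases eq_or_lt_of_le hk with heq | hlt
    · have h1 : H.coeff (k' + 1) = 2 ^ N := by
        rw [show k' + 1 = H.natDegree from by omega, Polynomial.coeff_natDegree, hHlead]
      have h2 : ((k' : ℝ) + 1) = (N : ℝ) := by rw [heq]; push_cast; ring
      rw [h1, h2]
      ring
    · have h1 : H.coeff (k' + 1) = 0 :=
        Polynomial.coeff_eq_zero_of_natDegree_lt (by omega)
      rw [h1]
      ring
  have hDlt : D.natDegree < N := by
    by_cases h0 : D = 0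
    · rw [h0]; simpa using (show 0 < N by omega)
    · by_contra h
      push_neg at h
      exact Polynomial.leadingCoeff_ne_zero.mpr h0 (hDcoeff D.natDegree h)
  have horth : ∀ Q : Polynomial ℝ, Q.natDegree < N →
      ∫ x : ℝ, D.eval x * Q.eval x * Real.exp (-x ^ 2) = 0 := by
    intro Q hQdeg
    set Q2 : Polynomial ℝ := Q.derivative.derivative - C 2 * X * Q.derivative with hQ2
    have hQ2deg : Q2.natDegree < N := by
      have h1 : Q.derivative.derivative.natDegree < N :=
        lt_of_le_of_lt (le_trans (Polynomial.natDegree_derivative_le _)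
          (Nat.sub_le _ _)) (lt_of_le_of_lt
            (le_trans (Polynomial.natDegree_derivative_le Q) (Nat.sub_le _ _)) hQdeg)
      have h2 : (C (2:ℝ) * X * Q.derivative).natDegree < N := by
        by_cases hq : Q.derivative = 0
        · rw [hq, mul_zero]; simpa using (show 0 < N by omega)
        · have hQpos : 1 ≤ Q.natDegree := by
            by_contra hc
            push_neg at hc
            obtain ⟨c, rfl⟩ := Polynomial.natDegree_eq_zero.mp (Nat.lt_one_iff.mp hc)
            exact hq (Polynomial.derivative_C)
          calc (C (2:ℝ) * X * Q.derivative).natDegree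
              ≤ (C (2:ℝ) * X).natDegree + Q.derivative.natDegree :=
                Polynomial.natDegree_mul_le
            _ ≤ 1 + (Q.natDegree - 1) := by
                have := Polynomial.natDegree_derivative_le Q
                have h2X : (C (2:ℝ) * X).natDegree = 1 :=
                  Polynomial.natDegree_C_mul_X 2 two_ne_zero
                omega
            _ < N := by omega
      exact lt_of_le_of_lt (Polynomial.natDegree_sub_le _ _) (max_lt h1 h2)
    have hpoint : ∀ x : ℝ, D.eval x * Q.eval x * Real.exp (-x ^ 2) =
        ((H.derivative * Q).derivative.eval x
            - 2 * x * (H.derivative * Q).eval x) * Real.exp (-x ^ 2)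
        - ((H * Q.derivative).derivative.eval x
            - 2 * x * (H * Q.derivative).eval x) * Real.exp (-x ^ 2)
        + H.eval x * Q2.eval x * Real.exp (-x ^ 2)
        + (2 * (N : ℝ)) * (H.eval x * Q.eval x * Real.exp (-x ^ 2)) := by
      intro x
      simp only [hD, hQ2, Polynomial.derivative_mul, eval_add, eval_sub, eval_mul,
        eval_C, eval_X]
      ring
    have hmulQ2 : (fun x : ℝ => H.eval x * Q2.eval x * Real.exp (-x ^ 2)) =
        fun x => (H * Q2).eval x * Real.exp (-x ^ 2) := by
      funext x; rw [eval_mul]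
    have hmulQ : (fun x : ℝ => H.eval x * Q.eval x * Real.exp (-x ^ 2)) =
        fun x => (H * Q).eval x * Real.exp (-x ^ 2) := by
      funext x; rw [eval_mul]
    have hf1 := integ_form (H.derivative * Q)
    have hf2 := integ_form (H * Q.derivative)
    have hf3 : Integrable (fun x : ℝ => H.eval x * Q2.eval x * Real.exp (-x ^ 2)) := by
      rw [hmulQ2]; exact integ_poly _
    have hf4 : Integrable (fun x : ℝ =>
        (2 * (N : ℝ)) * (H.eval x * Q.eval x * Real.exp (-x ^ 2))) := by
      exact ((integ_poly (H * Q)).const_mul (2 * (N : ℝ))).congr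
        (Eventually.of_forall fun x => by beta_reduce; rw [eval_mul])
    have hf12 : Integrable (fun x : ℝ =>
        ((H.derivative * Q).derivative.eval x
            - 2 * x * (H.derivative * Q).eval x) * Real.exp (-x ^ 2)
        - ((H * Q.derivative).derivative.eval x
            - 2 * x * (H * Q.derivative).eval x) * Real.exp (-x ^ 2)) := hf1.sub hf2
    have hf123 : Integrable (fun x : ℝ =>
        ((H.derivative * Q).derivative.eval x
            - 2 * x * (H.derivative * Q).eval x) * Real.exp (-x ^ 2)
        - ((H * Q.derivative).derivative.eval x
            - 2 * x * (H * Q.derivative).eval x) * Real.exp (-x ^ 2)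
        + H.eval x * Q2.eval x * Real.exp (-x ^ 2)) := hf12.add hf3
    rw [show (fun x : ℝ => D.eval x * Q.eval x * Real.exp (-x ^ 2)) = _ from funext hpoint]
    rw [integral_add hf123 hf4, integral_add hf12 hf3,
      integral_sub hf1 hf2, ftc_poly (H.derivative * Q), ftc_poly (H * Q.derivative),
      hHorth Q2 hQ2deg, integral_const_mul, hHorth Q hQdeg]
    ring
  have hsq := horth D hDlt
  have hnn : 0 ≤ fun x : ℝ => D.eval x * D.eval x * Real.exp (-x ^ 2) := by
    intro x
    exact mul_nonneg (mul_self_nonneg _) (Real.exp_pos _).le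
  have hint : Integrable (fun x : ℝ => D.eval x * D.eval x * Real.exp (-x ^ 2)) := by
    have : (fun x : ℝ => D.eval x * D.eval x * Real.exp (-x ^ 2)) =
        fun x => (D * D).eval x * Real.exp (-x ^ 2) := by
      funext x; rw [eval_mul]
    rw [this]; exact integ_poly _
  have hae := (integral_eq_zero_iff_of_nonneg hnn hint).mp hsq
  have hcont : Continuous (fun x : ℝ => D.eval x * D.eval x * Real.exp (-x ^ 2)) :=
    ((Polynomial.continuous D).mul (Polynomial.continuous D)).mul
      (Real.continuous_exp.comp (continuous_pow 2).neg)
  have hzero : (fun x : ℝ => D.eval x * D.eval x * Real.exp (-x ^ 2)) = 0 :=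
    (Continuous.ae_eq_iff_eq volume hcont continuous_const).mp hae
  have hDval : ∀ x : ℝ, D.eval x = 0 := by
    intro x
    have := congrFun hzero x
    simp only [Pi.zero_apply, mul_eq_zero] at this
    rcases this with (h | h) | h
    · exact h
    · exact h
    · exact absurd h (Real.exp_pos _).ne'
  exact Polynomial.funext fun x => by rw [hDval x, Polynomial.eval_zero]

lemma eval_derivative_prod {ι : Type*} [DecidableEq ι] (s : Finset ι) (w : ι → ℝ) (x : ℝ) :
    (Polynomial.derivative (∏ l ∈ s, (X - C (w l)))).eval x =
      ∑ l ∈ s, ∏ k ∈ s.erase l, (x - w k) := by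
  induction s using Finset.induction_on with
  | empty => simp
  | @insert a s ha ih =>
    rw [Finset.prod_insert ha, Polynomial.derivative_mul, Polynomial.derivative_sub,
      Polynomial.derivative_X, Polynomial.derivative_C, Finset.sum_insert ha,
      Finset.erase_insert ha]
    rw [eval_add, eval_mul, eval_mul, ih]
    simp only [sub_zero, eval_one, one_mul, eval_sub, eval_X, eval_C, eval_prod]
    rw [Finset.mul_sum]
    congr 1
    refine Finset.sum_congr rfl fun l hl => ?_
    rw [Finset.erase_insert_of_ne (fun h : a = l => ha (h.symm ▸ hl)),
      Finset.prod_insert (fun h => ha (Finset.mem_of_mem_erase h))]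


lemma roots_identity (N : ℕ) (hN : 1 ≤ N) (H : Polynomial ℝ) (hHdeg : H.natDegree = N)
    (hHlead : H.leadingCoeff = 2 ^ N) (z : Fin N → ℝ) (hzinj : Function.Injective z)
    (hzroot : ∀ i, H.eval (z i) = 0)
    (hode : H.derivative.derivative - C 2 * X * H.derivative + C (2 * (N : ℝ)) * H = 0)
    (i : Fin N) :
    ∑ l ∈ Finset.univ.erase i, (z i - z l)⁻¹ = z i := by
  classical
  have hHne : H ≠ 0 := fun h => by
    rw [h, Polynomial.leadingCoeff_zero] at hHlead
    exact (pow_ne_zero N two_ne_zero) hHlead.symm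
  -- factorization
  set M : Multiset ℝ := Finset.univ.val.map z with hM
  have hnodup : M.Nodup := Multiset.Nodup.map hzinj Finset.univ.nodup
  have hsub : M ≤ H.roots := by
    rw [Multiset.le_iff_subset hnodup]
    intro r hr
    obtain ⟨j, _, rfl⟩ := Multiset.mem_map.mp hr
    exact Polynomial.mem_roots'.mpr ⟨hHne, hzroot j⟩
  have hcardM : Multiset.card M = N := by simp [hM]
  have hMeq : M = H.roots :=
    Multiset.eq_of_le_of_card_le hsub
      (le_trans (H.card_roots' ) (by rw [hHdeg, hcardM]))
  have hcard : Multiset.card H.roots = H.natDegree := by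
    rw [← hMeq, hcardM, hHdeg]
  have hfact : H = C ((2 : ℝ) ^ N) * ∏ l, (X - C (z l)) := by
    conv_lhs => rw [← Polynomial.C_leadingCoeff_mul_prod_multiset_X_sub_C hcard]
    rw [hHlead, ← hMeq, hM, Multiset.map_map]
    rfl
  set a : ℝ := (2 : ℝ) ^ N with ha
  have hane : a ≠ 0 := pow_ne_zero N two_ne_zero
  set G : Polynomial ℝ := ∏ l ∈ Finset.univ.erase i, (X - C (z l)) with hG
  have hsplit : (∏ l, (X - C (z l))) = (X - C (z i)) * G :=
    (Finset.mul_prod_erase Finset.univ _ (Finset.mem_univ i)).symm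
  have hGeval : G.eval (z i) = ∏ k ∈ Finset.univ.erase i, (z i - z k) := by
    rw [hG, Polynomial.eval_prod]
    simp
  have hGne : G.eval (z i) ≠ 0 := by
    rw [hGeval]
    refine Finset.prod_ne_zero_iff.mpr fun k hk => sub_ne_zero.mpr fun h => ?_
    exact Finset.ne_of_mem_erase hk (hzinj h.symm)
  have hHder : H.derivative = C a * (G + (X - C (z i)) * G.derivative) := by
    rw [hfact, hsplit, Polynomial.derivative_C_mul, Polynomial.derivative_mul,
      Polynomial.derivative_sub, Polynomial.derivative_X, Polynomial.derivative_C]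
    ring
  have hHder2 : H.derivative.derivative =
      C a * (2 * G.derivative + (X - C (z i)) * G.derivative.derivative) := by
    rw [hHder, Polynomial.derivative_C_mul, Polynomial.derivative_add,
      Polynomial.derivative_mul, Polynomial.derivative_sub, Polynomial.derivative_X,
      Polynomial.derivative_C]
    ring
  have hevH' : H.derivative.eval (z i) = a * G.eval (z i) := by
    rw [hHder]; simp
  have hevH'' : H.derivative.derivative.eval (z i) = 2 * a * G.derivative.eval (z i) := by
    rw [hHder2]; simp; ring
  have hode_at : H.derivative.derivative.eval (z i)
      - 2 * z i * H.derivative.eval (z i) + 2 * N * H.eval (z i) = 0 := by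
    have := congrArg (Polynomial.eval (z i)) hode
    simpa using this
  rw [hzroot i, hevH', hevH''] at hode_at
  have hkey : G.derivative.eval (z i) = z i * G.eval (z i) := by
    have : a * (2 * G.derivative.eval (z i) - 2 * (z i * G.eval (z i))) = 0 := by
      linarith [hode_at]
    rcases mul_eq_zero.mp this with h | h
    · exact absurd h hane
    · linarith
  have hGder : G.derivative.eval (z i) =
      ∑ l ∈ Finset.univ.erase i, ∏ k ∈ (Finset.univ.erase i).erase l, (z i - z k) := by
    rw [hG, eval_derivative_prod]
  -- conclude
  have hmul : (∑ l ∈ Finset.univ.erase i, (z i - z l)⁻¹) * G.eval (z i)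
      = z i * G.eval (z i) := by
    rw [Finset.sum_mul, ← hkey, hGder]
    refine Finset.sum_congr rfl fun l hl => ?_
    have hd : z i - z l ≠ 0 :=
      sub_ne_zero.mpr fun h => Finset.ne_of_mem_erase hl (hzinj h.symm)
    rw [hGeval, ← Finset.mul_prod_erase _ _ hl, ← mul_assoc, inv_mul_cancel₀ hd, one_mul]
  exact mul_right_cancel₀ hGne hmul

lemma alg_det {N : ℕ} (hN : 1 ≤ N) (z : Fin N → ℝ) (hzmono : StrictMono z)
    (hz1 : ∀ i, ∑ l ∈ Finset.univ.erase i, (z i - z l)⁻¹ = z i)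
    (S : Matrix (Fin N) (Fin N) ℝ)
    (hS : S = Matrix.of fun i j =>
      if i = j then 1 + ∑ l ∈ Finset.univ.erase i, 1 / (z i - z l) ^ 2
      else -1 / (z i - z j) ^ 2) :
    S.det = (N.factorial : ℝ) := by
  classical
  set R : ℕ → Polynomial ℝ := fun m => ∑ a ∈ range m, ∑ b ∈ range (m - 1 - a),
      ((X : Polynomial ℝ) ^ (m - 2) - C (∑ l, z l ^ (m - 2 - a - b)) * X ^ (a + b)) with hR
  have hRcoeff : ∀ m k : ℕ, m ≤ k → (R m).coeff k = 0 := by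
    intro m k hk
    rw [hR, Polynomial.finset_sum_coeff]
    refine Finset.sum_eq_zero fun a ha => ?_
    rw [Polynomial.finset_sum_coeff]
    refine Finset.sum_eq_zero fun b hb => ?_
    have ha' := Finset.mem_range.mp ha
    have hb' := Finset.mem_range.mp hb
    rw [Polynomial.coeff_sub, Polynomial.coeff_C_mul, Polynomial.coeff_X_pow,
      Polynomial.coeff_X_pow, if_neg (by omega), if_neg (by omega)]
    simp
  have hRdeg : ∀ m : ℕ, m < N → (R m).natDegree < N := by
    intro m hm
    by_cases h0 : R m = 0
    · rw [h0]; simpa using (show 0 < N by omega)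
    · by_contra h
      push_neg at h
      exact Polynomial.leadingCoeff_ne_zero.mpr h0
        (hRcoeff m (R m).natDegree (le_trans hm.le h))
  set W : Matrix (Fin N) (Fin N) ℝ := Matrix.vandermonde z with hW
  set U : Matrix (Fin N) (Fin N) ℝ := Matrix.of fun k m : Fin N =>
    (if (k : ℕ) = (m : ℕ) then ((m : ℕ) + 1 : ℝ) else 0) + (R m).coeff k with hU
  have hdetW : W.det ≠ 0 := by
    rw [hW, Matrix.det_vandermonde]
    refine Finset.prod_ne_zero_iff.mpr fun i _ => Finset.prod_ne_zero_iff.mpr fun j hj => ?_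
    exact sub_ne_zero.mpr (hzmono (Finset.mem_Ioi.mp hj)).ne'
  have hUtri : U.BlockTriangular id := by
    intro k m hkm
    simp only [id] at hkm
    rw [hU]
    simp only [Matrix.of_apply]
    rw [if_neg (by omega : ¬ (k : ℕ) = (m : ℕ)), hRcoeff m k (by omega)]
    simp
  have hdetU : U.det = (N.factorial : ℝ) := by
    rw [Matrix.det_of_upperTriangular hUtri]
    have hdiag : ∀ m : Fin N, U m m = ((m : ℕ) + 1 : ℝ) := by
      intro m
      show (if (m : ℕ) = (m : ℕ) then ((m : ℕ) + 1 : ℝ) else 0) + (R m).coeff m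
        = ((m : ℕ) + 1 : ℝ)
      rw [if_pos rfl, hRcoeff m m le_rfl, add_zero]
    rw [Finset.prod_congr rfl fun m _ => hdiag m,
      Fin.prod_univ_eq_prod_range (fun i => ((i : ℕ) + 1 : ℝ)) N,
      ← Finset.prod_range_add_one_eq_factorial N]
    push_cast
    rfl
  have hmul : S * W = W * U := by
    ext i m
    rw [Matrix.mul_apply, Matrix.mul_apply]
    have hWcol : ∀ j : Fin N, W j m = z j ^ (m : ℕ) := fun j => rfl
    have hWrow : ∀ j : Fin N, W i j = z i ^ (j : ℕ) := fun j => rfl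
    have hSii : S i i = 1 + ∑ l ∈ Finset.univ.erase i, 1 / (z i - z l) ^ 2 := by
      rw [hS]; simp
    have hSij : ∀ j ∈ Finset.univ.erase i, S i j = -1 / (z i - z j) ^ 2 := by
      intro j hj
      rw [hS]
      simp only [Matrix.of_apply]
      rw [if_neg (Finset.ne_of_mem_erase hj).symm]
    have hL : ∑ j, S i j * W j m =
        z i ^ (m : ℕ) + ∑ l ∈ Finset.univ.erase i,
          (z i ^ (m : ℕ) - z l ^ (m : ℕ)) / (z i - z l) ^ 2 := by
      rw [← Finset.add_sum_erase _ (fun j => S i j * W j m) (Finset.mem_univ i)]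
      have hsum : ∑ j ∈ Finset.univ.erase i, S i j * W j m =
          ∑ j ∈ Finset.univ.erase i, (-1 / (z i - z j) ^ 2) * z j ^ (m : ℕ) :=
        Finset.sum_congr rfl fun j hj => by rw [hSij j hj, hWcol]
      rw [hsum, hSii, hWcol, add_mul, one_mul, Finset.sum_mul, add_assoc,
        ← Finset.sum_add_distrib]
      congr 1
      refine Finset.sum_congr rfl fun j hj => ?_
      rw [sub_div]
      ring
    have hRsplit : ∑ j, W i j * U j m =
        ((m : ℕ) + 1 : ℝ) * z i ^ (m : ℕ) + ∑ k : Fin N, (R m).coeff k * z i ^ (k : ℕ) := by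
      have hterm : ∀ j : Fin N, W i j * U j m =
          (if j = m then ((m : ℕ) + 1 : ℝ) * z i ^ (m : ℕ) else 0) +
            (R m).coeff j * z i ^ (j : ℕ) := by
        intro j
        have h1 : U j m = (if (j : ℕ) = (m : ℕ) then ((m : ℕ) + 1 : ℝ) else 0)
            + (R m).coeff j := rfl
        rw [h1, hWrow j, mul_add]
        simp only [Fin.val_inj]
        split_ifs with h
        · rw [h]; ring
        · ring
      rw [Finset.sum_congr rfl fun j _ => hterm j, Finset.sum_add_distrib,
        Finset.sum_ite_eq' Finset.univ m, if_pos (Finset.mem_univ m)]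
    rw [hL, hRsplit, core_identity z hzmono.injective i (hz1 i) (m : ℕ)]
    have hRm : (∑ a ∈ range (m : ℕ), ∑ b ∈ range ((m : ℕ) - 1 - a),
        ((X : Polynomial ℝ) ^ ((m : ℕ) - 2) -
          C (∑ l, z l ^ ((m : ℕ) - 2 - a - b)) * X ^ (a + b))) = R (m : ℕ) := rfl
    rw [hRm]
    congr 1
    rw [Polynomial.eval_eq_sum_range' (hRdeg (m : ℕ) m.isLt),
      Fin.sum_univ_eq_sum_range (fun k => (R (m : ℕ)).coeff k * z i ^ k) N]
  have : S.det * W.det = W.det * U.det := by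
    rw [← Matrix.det_mul, ← Matrix.det_mul, hmul]
  rw [mul_comm W.det U.det] at this
  rw [mul_right_cancel₀ hdetW this, hdetU]

theorem hermite_matrix_det
    (N : ℕ) (hN : 1 ≤ N)
    (H : Polynomial ℝ) (hHdeg : H.natDegree = N)
    (hHlead : H.leadingCoeff = 2 ^ N)
    (hHorth : ∀ Q : Polynomial ℝ, Q.natDegree < N →
      ∫ x : ℝ, H.eval x * Q.eval x * Real.exp (-x ^ 2) = 0)
    (z : Fin N → ℝ) (hzmono : StrictMono z)
    (hzroot : ∀ i, H.eval (z i) = 0)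
    (S : Matrix (Fin N) (Fin N) ℝ)
    (hS : S = Matrix.of fun i j =>
      if i = j then 1 + ∑ l ∈ Finset.univ.erase i, 1 / (z i - z l) ^ 2
      else -1 / (z i - z j) ^ 2) :
    S.det = (N.factorial : ℝ) := by
  have hode := hermite_ode N hN H hHdeg hHlead hHorth
  have hz1 : ∀ i, ∑ l ∈ Finset.univ.erase i, (z i - z l)⁻¹ = z i := fun i =>
    roots_identity N hN H hHdeg hHlead z hzmono.injective hzroot hode i
  exact alg_det hN z hzmono hz1 S hS
end

section
/- Let N ≥ 1 and β > −1, and let z_1 < ... < z_N be the ordered zeros of the generalized Laguerre polynomial L_N^{(β)}; all z_j are positive. Let S^L be the N×N matrix with entries s^L_{j,j} = (β+1)/z_j² + 2Σ_{l≠j} 1/(z_j−z_l)² and s^L_{i,j} = −2/(z_i−z_j)² for i ≠ j. Then det(S^L) = N!/(β+1)_N, where (x)_N = x(x+1)···(x+N−1) denotes the Pochhammer symbol. -/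
open MeasureTheory Filter Real Finset Topology
open Set Polynomial


noncomputable def wInt (β : ℝ) (P : Polynomial ℝ) : ℝ :=
  ∫ x in Set.Ioi (0:ℝ), P.eval x * x ^ β * Real.exp (-x)

noncomputable def Dop0 (β : ℝ) (q : Polynomial ℝ) : Polynomial ℝ :=
  Polynomial.X * (Polynomial.derivative (Polynomial.derivative q))
    + (Polynomial.C (β+1) - Polynomial.X) * Polynomial.derivative q

noncomputable def Dop (β : ℝ) (N : ℕ) (q : Polynomial ℝ) : Polynomial ℝ :=
  Dop0 β q + Polynomial.C (N:ℝ) * q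

lemma integrableOn_poly_rpow_exp {β : ℝ} (hβ : -1 < β) (P : Polynomial ℝ) :
    IntegrableOn (fun x => P.eval x * x ^ β * Real.exp (-x)) (Set.Ioi 0) := by
  have key : ∀ n : ℕ, IntegrableOn (fun x : ℝ => x ^ (β + n) * Real.exp (-x)) (Set.Ioi 0) := by
    intro n
    have h : (0:ℝ) < β + n + 1 := by
      have : (0:ℝ) ≤ n := Nat.cast_nonneg n
      linarith
    have := Real.GammaIntegral_convergent (s := β + n + 1) h
    refine this.congr_fun (fun x hx => ?_) measurableSet_Ioi
    rw [mul_comm]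
    norm_num
  have : IntegrableOn (fun x : ℝ =>
      ∑ k ∈ Finset.range (P.natDegree + 1), P.coeff k * (x ^ (β + k) * Real.exp (-x)))
      (Set.Ioi 0) := by
    apply integrable_finset_sum
    intro k _
    exact IntegrableOn.congr_fun ((key k).smul (P.coeff k))
      (fun x _ => by simp [smul_eq_mul]) measurableSet_Ioi
  refine this.congr_fun (fun x hx => ?_) measurableSet_Ioi
  have hx : (0:ℝ) < x := hx
  rw [Polynomial.eval_eq_sum_range, Finset.sum_mul, Finset.sum_mul]
  refine Finset.sum_congr rfl fun k _ => ?_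
  rw [Real.rpow_add hx, Real.rpow_natCast]
  ring

lemma wInt_sub {β : ℝ} (hβ : -1 < β) (A B : Polynomial ℝ) :
    wInt β (A - B) = wInt β A - wInt β B := by
  unfold wInt
  rw [← integral_sub (integrableOn_poly_rpow_exp hβ A) (integrableOn_poly_rpow_exp hβ B)]
  congr 1
  funext x
  simp [sub_mul]

lemma wInt_add {β : ℝ} (hβ : -1 < β) (A B : Polynomial ℝ) :
    wInt β (A + B) = wInt β A + wInt β B := by
  unfold wInt
  rw [← integral_add (integrableOn_poly_rpow_exp hβ A) (integrableOn_poly_rpow_exp hβ B)]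
  congr 1
  funext x
  simp [add_mul]

lemma ftc_zero {β : ℝ} (hβ : -1 < β) (R : Polynomial ℝ) :
    wInt β ((Polynomial.C (β+1) - Polynomial.X) * R + Polynomial.X * Polynomial.derivative R)
      = 0 := by
  set Q : Polynomial ℝ :=
    (Polynomial.C (β+1) - Polynomial.X) * R + Polynomial.X * Polynomial.derivative R with hQ
  set f : ℝ → ℝ := fun x => x ^ (β+1) * Real.exp (-x) * R.eval x with hf
  have hb1 : (0:ℝ) < β + 1 := by linarith
  have hf0 : f 0 = 0 := by
    simp [hf, Real.zero_rpow (ne_of_gt hb1)]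
  have hderiv : ∀ x ∈ Set.Ioi (0:ℝ),
      HasDerivAt f (Q.eval x * x ^ β * Real.exp (-x)) x := by
    intro x hx
    have hx : (0:ℝ) < x := hx
    have h1 : HasDerivAt (fun y : ℝ => y ^ (β+1)) ((β+1) * x ^ β) x := by
      have := Real.hasDerivAt_rpow_const (x := x) (p := β+1) (Or.inl (ne_of_gt hx))
      rw [show β + 1 - 1 = β by ring] at this
      exact this
    have h2 : HasDerivAt (fun y : ℝ => Real.exp (-y)) (-Real.exp (-x)) x := by
      exact ((Real.hasDerivAt_exp (-x)).comp x ((hasDerivAt_id x).neg)).congr_deriv (by simp)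
    have h3 : HasDerivAt (fun y => R.eval y) ((Polynomial.derivative R).eval x) x :=
      R.hasDerivAt x
    have := (h1.mul h2).mul h3
    refine this.congr_deriv ?_
    have hx1 : x ^ (β + 1) = x ^ β * x := Real.rpow_add_one (ne_of_gt hx) β
    simp only [hQ, Polynomial.eval_add, Polynomial.eval_mul, Polynomial.eval_sub,
      Polynomial.eval_C, Polynomial.eval_X, Pi.mul_apply]
    rw [hx1]
    ring
  have hint : IntegrableOn (fun x => Q.eval x * x ^ β * Real.exp (-x)) (Set.Ioi 0) :=
    integrableOn_poly_rpow_exp hβ Q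
  have htop : Tendsto f atTop (𝓝 0) := by
    have t1 := tendsto_rpow_mul_exp_neg_mul_atTop_nhds_zero (β+1) (1/2) (by norm_num)
    have t2 := (R.comp (Polynomial.C 2 * Polynomial.X)).tendsto_div_exp_atTop
    have t3 : Tendsto (fun x : ℝ => x / 2) atTop atTop :=
      Tendsto.atTop_div_const (by norm_num) tendsto_id
    have t4 := t2.comp t3
    have t5 : Tendsto (fun x : ℝ => R.eval x * Real.exp (-(1/2)*x)) atTop (𝓝 0) := by
      refine t4.congr (fun x => ?_)
      simp only [Function.comp_apply, Polynomial.eval_comp, Polynomial.eval_mul,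
        Polynomial.eval_C, Polynomial.eval_X]
      rw [show (2:ℝ) * (x / 2) = x by ring, div_eq_mul_inv, ← Real.exp_neg]
      ring_nf
    have := t1.mul t5
    rw [mul_zero] at this
    refine this.congr (fun x => ?_)
    show x ^ (β+1) * Real.exp (-(1/2)*x) * (R.eval x * Real.exp (-(1/2)*x)) = f x
    have hx2 : Real.exp (-(1/2)*x) * Real.exp (-(1/2)*x) = Real.exp (-x) := by
      rw [← Real.exp_add]; ring_nf
    rw [hf]
    linear_combination (x ^ (β+1) * R.eval x) * hx2
  have hcont : ContinuousWithinAt f (Set.Ici 0) 0 := by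
    apply ContinuousAt.continuousWithinAt
    have c1 : ContinuousAt (fun y : ℝ => y ^ (β+1)) 0 :=
      Real.continuousAt_rpow_const 0 (β+1) (Or.inr hb1.le)
    exact (c1.mul ((Real.continuous_exp.comp continuous_neg).continuousAt)).mul
      (R.continuous_aeval.continuousAt)
  have := integral_Ioi_of_hasDerivAt_of_tendsto hcont hderiv hint htop
  rw [hf0, sub_zero] at this
  exact this

lemma natDegree_lt_of_coeff_eq_zero {P : Polynomial ℝ} {N : ℕ} (hN : 1 ≤ N)
    (h : ∀ k, N ≤ k → P.coeff k = 0) : P.natDegree < N := by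
  by_cases hP : P = 0
  · simpa [hP] using (show 0 < N from hN)
  · rw [Polynomial.natDegree_lt_iff_degree_lt hP, Polynomial.degree_lt_iff_coeff_zero]
    exact h

lemma Dop_coeff (β : ℝ) (N : ℕ) (q : Polynomial ℝ) (k : ℕ) :
    (Dop β N q).coeff k
      = ((N:ℝ) - k) * q.coeff k + ((k:ℝ)+1) * (((k:ℝ)+1)+β) * q.coeff (k+1) := by
  unfold Dop Dop0
  rcases k with _ | k
  · rw [Polynomial.coeff_add, Polynomial.coeff_add, Polynomial.coeff_X_mul_zero, sub_mul,
      Polynomial.coeff_sub, Polynomial.coeff_C_mul, Polynomial.coeff_C_mul,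
      Polynomial.coeff_X_mul_zero, Polynomial.coeff_derivative]
    push_cast
    ring
  · rw [Polynomial.coeff_add, Polynomial.coeff_add, Polynomial.coeff_X_mul, sub_mul,
      Polynomial.coeff_sub, Polynomial.coeff_C_mul, Polynomial.coeff_C_mul,
      Polynomial.coeff_X_mul, Polynomial.coeff_derivative, Polynomial.coeff_derivative,
      Polynomial.coeff_derivative]
    push_cast
    ring

lemma Dop_natDegree_lt {β : ℝ} {N : ℕ} (hN : 1 ≤ N) {q : Polynomial ℝ}
    (hq : q.natDegree ≤ N) : (Dop β N q).natDegree < N := by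
  refine natDegree_lt_of_coeff_eq_zero hN (fun k hk => ?_)
  rw [Dop_coeff]
  have h1 : q.coeff (k+1) = 0 :=
    Polynomial.coeff_eq_zero_of_natDegree_lt (lt_of_le_of_lt hq (by omega))
  rcases eq_or_lt_of_le hk with rfl | hk'
  · simp [h1]
  · have h0 : q.coeff k = 0 :=
      Polynomial.coeff_eq_zero_of_natDegree_lt (lt_of_le_of_lt hq hk')
    simp [h0, h1]

lemma ode_of_orth {N : ℕ} {β : ℝ} (hN : 1 ≤ N) (hβ : -1 < β) (L : Polynomial ℝ)
    (hLdeg : L.natDegree = N)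
    (hLorth : ∀ Q : Polynomial ℝ, Q.natDegree < N →
      ∫ x in Set.Ioi (0:ℝ), L.eval x * Q.eval x * x ^ β * Real.exp (-x) = 0) :
    Dop β N L = 0 := by
  have hLorth' : ∀ Q : Polynomial ℝ, Q.natDegree < N → wInt β (Q * L) = 0 := by
    intro Q hQ
    refine Eq.trans ?_ (hLorth Q hQ)
    rw [wInt]
    congr 1
    funext x
    rw [Polynomial.eval_mul]
    ring
  have selfadj : ∀ A B : Polynomial ℝ, wInt β (Dop0 β A * B) = wInt β (Dop0 β B * A) := by
    intro A B
    have hpoly : Dop0 β A * B - Dop0 β B * A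
        = (Polynomial.C (β+1) - Polynomial.X)
            * (Polynomial.derivative A * B - Polynomial.derivative B * A)
          + Polynomial.X * Polynomial.derivative
              (Polynomial.derivative A * B - Polynomial.derivative B * A) := by
      rw [Polynomial.derivative_sub, Polynomial.derivative_mul, Polynomial.derivative_mul]
      unfold Dop0
      ring
    have h := ftc_zero hβ (Polynomial.derivative A * B - Polynomial.derivative B * A)
    rw [← hpoly, wInt_sub hβ] at h
    linarith
  set G := Dop β N L with hG
  have hGdeg : G.natDegree < N := Dop_natDegree_lt hN (le_of_eq hLdeg)
  have hGG : wInt β (G * G) = 0 := by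
    have e1 : G * G = Dop0 β L * G + (Polynomial.C (N:ℝ) * G) * L := by
      rw [hG]; unfold Dop; ring
    have e2 : Dop0 β G * L + (Polynomial.C (N:ℝ) * G) * L
        = (Dop0 β G + Polynomial.C (N:ℝ) * G) * L := by ring
    rw [e1, wInt_add hβ, selfadj L G, ← wInt_add hβ, e2]
    have : Dop0 β G + Polynomial.C (N:ℝ) * G = Dop β N G := rfl
    rw [this]
    exact hLorth' _ (Dop_natDegree_lt hN hGdeg.le)
  by_contra hG0
  have hnn : 0 ≤ᵐ[volume.restrict (Set.Ioi (0:ℝ))]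
      fun x => (G*G).eval x * x ^ β * Real.exp (-x) := by
    filter_upwards [ae_restrict_mem measurableSet_Ioi] with x hx
    have hx' : (0:ℝ) < x := hx
    have h1 : (0:ℝ) ≤ (G*G).eval x := by rw [Polynomial.eval_mul]; exact mul_self_nonneg _
    have h2 : (0:ℝ) < x ^ β := Real.rpow_pos_of_pos hx' β
    have h3 : (0:ℝ) < Real.exp (-x) := Real.exp_pos _
    positivity
  have hface := (integral_eq_zero_iff_of_nonneg_ae hnn (integrableOn_poly_rpow_exp hβ (G*G))).mp hGG
  have hae : ∀ᵐ x ∂(volume.restrict (Set.Ioi (0:ℝ))), G.eval x = 0 := by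
    have hface' : ∀ᵐ x ∂(volume.restrict (Set.Ioi (0:ℝ))),
        (G*G).eval x * x ^ β * Real.exp (-x) = 0 := hface
    filter_upwards [hface', ae_restrict_mem measurableSet_Ioi] with x h1 h2
    have hx' : (0:ℝ) < x := h2
    rcases mul_eq_zero.mp h1 with h | h
    · rcases mul_eq_zero.mp h with h' | h'
      · rw [Polynomial.eval_mul] at h'
        exact mul_self_eq_zero.mp h'
      · exact absurd h' (ne_of_gt (Real.rpow_pos_of_pos hx' β))
    · exact absurd h (Real.exp_ne_zero _)
  have hopen : MeasurableSet {x : ℝ | G.eval x ≠ 0} := by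
    have : IsOpen {x : ℝ | G.eval x ≠ 0} :=
      isOpen_ne.preimage G.continuous
    exact this.measurableSet
  have h0 : (volume.restrict (Set.Ioi (0:ℝ))) {x | G.eval x ≠ 0} = 0 := by
    have := ae_iff.mp hae
    simpa using this
  have h1 : volume ({x : ℝ | G.eval x ≠ 0} ∩ Set.Ioi 0) = 0 := by
    rw [← Measure.restrict_apply hopen]
    exact h0
  have hfin : Set.Finite {x : ℝ | G.IsRoot x} := Polynomial.finite_setOf_isRoot hG0
  have h2 : Set.Ioi (0:ℝ) ⊆ ({x : ℝ | G.eval x ≠ 0} ∩ Set.Ioi 0) ∪ {x : ℝ | G.IsRoot x} := by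
    intro x hx
    by_cases h : G.eval x = 0
    · exact Or.inr h
    · exact Or.inl ⟨h, hx⟩
  have h3 : volume (Set.Ioi (0:ℝ)) = 0 := by
    refine le_antisymm ?_ zero_le
    calc volume (Set.Ioi (0:ℝ))
        ≤ volume (({x : ℝ | G.eval x ≠ 0} ∩ Set.Ioi 0) ∪ {x : ℝ | G.IsRoot x}) :=
          measure_mono h2
      _ ≤ volume ({x : ℝ | G.eval x ≠ 0} ∩ Set.Ioi 0) + volume {x : ℝ | G.IsRoot x} :=
          measure_union_le _ _
      _ = 0 := by rw [h1, hfin.measure_zero, add_zero]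
  rw [Real.volume_Ioi] at h3
  exact (by simp : (⊤ : ENNReal) ≠ 0) h3


lemma deriv_prod_XC {ι : Type*} [DecidableEq ι] (z : ι → ℝ) (s : Finset ι) :
    Polynomial.derivative (∏ i ∈ s, (Polynomial.X - Polynomial.C (z i)))
      = ∑ i ∈ s, ∏ l ∈ s.erase i, (Polynomial.X - Polynomial.C (z l)) := by
  induction s using Finset.induction_on with
  | empty => simp
  | @insert a s ha ih =>
    rw [Finset.prod_insert ha, Polynomial.derivative_mul, ih, Finset.sum_insert ha,
      Polynomial.derivative_sub, Polynomial.derivative_X, Polynomial.derivative_C, sub_zero,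
      one_mul, Finset.erase_insert ha]
    congr 1
    rw [Finset.mul_sum]
    refine Finset.sum_congr rfl fun i hi => ?_
    have hia : i ≠ a := by rintro rfl; exact ha hi
    rw [Finset.erase_insert_of_ne hia.symm, Finset.prod_insert (fun h => ha (Finset.mem_of_mem_erase h))]

noncomputable def pie {N : ℕ} (z : Fin N → ℝ) (i : Fin N) : Polynomial ℝ :=
  ∏ l ∈ Finset.univ.erase i, (Polynomial.X - Polynomial.C (z l))

section
variable {N : ℕ} {z : Fin N → ℝ} (hzinj : Function.Injective z)

lemma eval_prod_XC (s : Finset (Fin N)) (x : ℝ) :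
    (∏ l ∈ s, (Polynomial.X - Polynomial.C (z l))).eval x = ∏ l ∈ s, (x - z l) := by
  simp [Polynomial.eval_prod]

lemma pie_eval_ne {i j : Fin N} (hij : i ≠ j) : (pie z i).eval (z j) = 0 := by
  rw [pie, eval_prod_XC]
  exact Finset.prod_eq_zero (Finset.mem_erase.mpr ⟨hij.symm, Finset.mem_univ j⟩) (by ring)

include hzinj in
lemma pie_eval_self_ne_zero (j : Fin N) : (pie z j).eval (z j) ≠ 0 := by
  rw [pie, eval_prod_XC]
  refine Finset.prod_ne_zero_iff.mpr fun l hl => sub_ne_zero.mpr fun h => ?_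
  exact (Finset.mem_erase.mp hl).1 (hzinj h.symm)

lemma dpie_eval_ne {i j : Fin N} (hij : i ≠ j) :
    (Polynomial.derivative (pie z i)).eval (z j) * (z j - z i) = (pie z j).eval (z j) := by
  rw [pie, deriv_prod_XC, Polynomial.eval_finset_sum]
  rw [Finset.sum_eq_single j]
  · rw [eval_prod_XC]
    rw [show (Finset.univ.erase i).erase j = (Finset.univ.erase j).erase i from
      Finset.erase_right_comm]
    rw [pie]
    rw [eval_prod_XC]
    exact Finset.prod_erase_mul _ _ (Finset.mem_erase.mpr ⟨hij, Finset.mem_univ i⟩)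
  · intro k hk hkj
    rw [eval_prod_XC]
    refine Finset.prod_eq_zero (Finset.mem_erase.mpr ⟨hkj.symm, ?_⟩) (by ring)
    exact Finset.mem_erase.mpr ⟨hij.symm, Finset.mem_univ j⟩
  · intro hj
    exact absurd (Finset.mem_erase.mpr ⟨hij.symm, Finset.mem_univ j⟩) hj

include hzinj in
lemma B_eq (j : Fin N) :
    (Polynomial.derivative (pie z j)).eval (z j)
      = (pie z j).eval (z j) * ∑ k ∈ Finset.univ.erase j, (z j - z k)⁻¹ := by
  rw [pie, deriv_prod_XC, Polynomial.eval_finset_sum, Finset.mul_sum]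
  simp only [eval_prod_XC]
  refine Finset.sum_congr rfl fun k hk => ?_
  have hkj : z j - z k ≠ 0 := sub_ne_zero.mpr fun h => (Finset.mem_erase.mp hk).1 (hzinj h.symm)
  rw [← Finset.mul_prod_erase _ _ hk]
  field_simp

include hzinj in
lemma C_eq (j : Fin N) :
    (Polynomial.derivative (Polynomial.derivative (pie z j))).eval (z j)
      = (pie z j).eval (z j) * ∑ k ∈ Finset.univ.erase j, ∑ m ∈ (Finset.univ.erase j).erase k,
          (z j - z k)⁻¹ * (z j - z m)⁻¹ := by
  rw [pie, deriv_prod_XC, map_sum, Polynomial.eval_finset_sum, Finset.mul_sum]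
  refine Finset.sum_congr rfl fun k hk => ?_
  rw [deriv_prod_XC, Polynomial.eval_finset_sum, Finset.mul_sum]
  simp only [eval_prod_XC]
  refine Finset.sum_congr rfl fun m hm => ?_
  have hkj : z j - z k ≠ 0 := sub_ne_zero.mpr fun h => (Finset.mem_erase.mp hk).1 (hzinj h.symm)
  have hmj : z j - z m ≠ 0 := sub_ne_zero.mpr fun h =>
    (Finset.mem_erase.mp (Finset.mem_of_mem_erase hm)).1 (hzinj h.symm)
  rw [← Finset.mul_prod_erase _ _ hk, ← Finset.mul_prod_erase _ _ hm]
  field_simp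


lemma ode_local {N : ℕ} {β : ℝ} {z : Fin N → ℝ}
    (hode : Dop β N (∏ i, (Polynomial.X - Polynomial.C (z i))) = 0) (i : Fin N) :
    (Polynomial.X - Polynomial.C (z i)) * Dop β N (pie z i)
      + (2 * Polynomial.X * Polynomial.derivative (pie z i)
         + (Polynomial.C (β+1) - Polynomial.X) * pie z i) = 0 := by
  have hp : (∏ i, (Polynomial.X - Polynomial.C (z i)))
      = (Polynomial.X - Polynomial.C (z i)) * pie z i :=
    (Finset.mul_prod_erase _ _ (Finset.mem_univ i)).symm
  have h := hode
  rw [hp] at h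
  have hd1 : Polynomial.derivative ((Polynomial.X - Polynomial.C (z i)) * pie z i)
      = pie z i + (Polynomial.X - Polynomial.C (z i)) * Polynomial.derivative (pie z i) := by
    rw [Polynomial.derivative_mul, Polynomial.derivative_sub, Polynomial.derivative_X,
      Polynomial.derivative_C]
    ring
  have hd2 : Polynomial.derivative (Polynomial.derivative
        ((Polynomial.X - Polynomial.C (z i)) * pie z i))
      = 2 * Polynomial.derivative (pie z i)
        + (Polynomial.X - Polynomial.C (z i))
            * Polynomial.derivative (Polynomial.derivative (pie z i)) := by
    rw [hd1, Polynomial.derivative_add, Polynomial.derivative_mul, Polynomial.derivative_sub,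
      Polynomial.derivative_X, Polynomial.derivative_C]
    ring
  unfold Dop Dop0 at h ⊢
  rw [hd2, hd1] at h
  linear_combination h

lemma entry_offdiag {N : ℕ} {β : ℝ} {z : Fin N → ℝ} (hzinj : Function.Injective z)
    (hode : Dop β N (∏ i, (Polynomial.X - Polynomial.C (z i))) = 0) {i j : Fin N} (hij : i ≠ j) :
    (Dop β N (pie z i)).eval (z j) * (z j - z i)^2
      = -2 * z j * (pie z j).eval (z j) := by
  have h := congrArg (Polynomial.eval (z j)) (ode_local hode i)
  simp only [Polynomial.eval_add, Polynomial.eval_mul, Polynomial.eval_sub, Polynomial.eval_X,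
    Polynomial.eval_C, Polynomial.eval_zero, Polynomial.eval_ofNat, pie_eval_ne hij,
    mul_zero, add_zero] at h
  have hd := dpie_eval_ne (z := z) hij
  linear_combination (z j - z i) * h - 2 * z j * hd

lemma sum_offdiag {ι : Type*} [DecidableEq ι] (E : Finset ι) (t : ι → ℝ) :
    ∑ k ∈ E, ∑ m ∈ E.erase k, t k * t m = (∑ k ∈ E, t k)^2 - ∑ k ∈ E, t k^2 := by
  rw [sq, Finset.sum_mul_sum, eq_sub_iff_add_eq, ← Finset.sum_add_distrib]
  refine Finset.sum_congr rfl fun k hk => ?_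
  rw [sq]
  exact Finset.sum_erase_add _ _ hk

lemma entry_diag {N : ℕ} {β : ℝ} {z : Fin N → ℝ} (hzinj : Function.Injective z)
    (hzpos : ∀ i, 0 < z i)
    (hode : Dop β N (∏ i, (Polynomial.X - Polynomial.C (z i))) = 0) (j : Fin N) :
    (Dop β N (pie z j)).eval (z j)
      = ((β + 1) / z j ^ 2 + 2 * ∑ l ∈ Finset.univ.erase j, 1 / (z j - z l) ^ 2)
        * (z j * (pie z j).eval (z j)) := by
  have hzj : z j ≠ 0 := ne_of_gt (hzpos j)
  have h1 := congrArg (Polynomial.eval (z j)) (ode_local hode j)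
  simp only [Polynomial.eval_add, Polynomial.eval_mul, Polynomial.eval_sub, Polynomial.eval_X,
    Polynomial.eval_C, Polynomial.eval_zero, Polynomial.eval_ofNat, sub_self, zero_mul,
    zero_add] at h1
  -- h1 : 2 * z j * B + (β+1-z j) * A = 0  (roughly)
  have hD := congrArg Polynomial.derivative (ode_local hode j)
  simp only [Polynomial.derivative_add, Polynomial.derivative_mul, Polynomial.derivative_sub,
    Polynomial.derivative_X, Polynomial.derivative_C, Polynomial.derivative_ofNat,
    Polynomial.derivative_zero] at hD
  have h2 := congrArg (Polynomial.eval (z j)) hD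
  simp only [Polynomial.eval_add, Polynomial.eval_mul, Polynomial.eval_sub, Polynomial.eval_X,
    Polynomial.eval_C, Polynomial.eval_zero, Polynomial.eval_ofNat, Polynomial.eval_one,
    sub_self, zero_mul, zero_add, mul_zero, add_zero] at h2
  have hB := B_eq hzinj j
  have hC := C_eq hzinj j
  rw [show (∑ k ∈ Finset.univ.erase j, ∑ m ∈ (Finset.univ.erase j).erase k,
      (z j - z k)⁻¹ * (z j - z m)⁻¹)
    = (∑ k ∈ Finset.univ.erase j, (z j - z k)⁻¹)^2
      - ∑ k ∈ Finset.univ.erase j, ((z j - z k)⁻¹)^2 from by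
      simpa using sum_offdiag (Finset.univ.erase j) (fun k => (z j - z k)⁻¹)] at hC
  rw [hB] at h1 h2
  rw [hC] at h2
  set A := (pie z j).eval (z j) with hA
  set s1 := ∑ k ∈ Finset.univ.erase j, (z j - z k)⁻¹ with hs1
  have hs2 : ∑ l ∈ Finset.univ.erase j, 1 / (z j - z l) ^ 2
      = ∑ k ∈ Finset.univ.erase j, ((z j - z k)⁻¹)^2 := by
    refine Finset.sum_congr rfl fun k hk => ?_
    rw [one_div, inv_pow]
  rw [hs2]
  set s2 := ∑ k ∈ Finset.univ.erase j, ((z j - z k)⁻¹)^2 with hs2'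
  field_simp
  linear_combination z j * h2 - (z j * s1 + 1) * h1

theorem laguerre_matrix_det
    (N : ℕ) (hN : 1 ≤ N) (β : ℝ) (hβ : -1 < β)
    (L : Polynomial ℝ) (hLdeg : L.natDegree = N)
    (hLlead : L.leadingCoeff = (-1) ^ N / (N.factorial : ℝ))
    (hLorth : ∀ Q : Polynomial ℝ, Q.natDegree < N →
      ∫ x in Set.Ioi (0 : ℝ), L.eval x * Q.eval x * x ^ β * Real.exp (-x) = 0)
    (z : Fin N → ℝ) (hzmono : StrictMono z)
    (hzroot : ∀ i, L.eval (z i) = 0)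
    (hzpos : ∀ i, 0 < z i)
    (S : Matrix (Fin N) (Fin N) ℝ)
    (hS : S = Matrix.of fun i j =>
      if i = j then (β + 1) / z j ^ 2 + 2 * ∑ l ∈ Finset.univ.erase j, 1 / (z j - z l) ^ 2
      else -2 / (z i - z j) ^ 2) :
    S.det = (N.factorial : ℝ) / ∏ j ∈ Finset.range N, (β + 1 + j) := by
  classical
  have hzinj : Function.Injective z := hzmono.injective
  set p : Polynomial ℝ := ∏ i, (Polynomial.X - Polynomial.C (z i)) with hp
  have hpmonic : p.Monic :=
    Polynomial.monic_prod_of_monic _ _ fun i _ => Polynomial.monic_X_sub_C (z i)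
  have hpdeg : p.natDegree = N := by
    rw [hp, Polynomial.natDegree_prod _ _ fun i _ => Polynomial.X_sub_C_ne_zero (z i)]
    simp [Polynomial.natDegree_X_sub_C]
  have hpcoeffN : p.coeff N = 1 := by
    have := hpmonic.coeff_natDegree
    rwa [hpdeg] at this
  have hlcne : L.leadingCoeff ≠ 0 := by
    rw [hLlead]
    exact div_ne_zero (pow_ne_zero _ (by norm_num))
      (Nat.cast_ne_zero.mpr (Nat.factorial_ne_zero N))
  have hpz : ∀ i, p.eval (z i) = 0 := by
    intro i
    rw [hp, eval_prod_XC]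
    exact Finset.prod_eq_zero (Finset.mem_univ i) (by ring)
  have hLp : L = Polynomial.C L.leadingCoeff * p := by
    have hdiff : (L - Polynomial.C L.leadingCoeff * p).natDegree < N := by
      apply natDegree_lt_of_coeff_eq_zero hN
      intro k hk
      rw [Polynomial.coeff_sub, Polynomial.coeff_C_mul]
      rcases eq_or_lt_of_le hk with rfl | hk'
      · rw [hpcoeffN, mul_one, ← hLdeg, Polynomial.coeff_natDegree, sub_self]
      · rw [Polynomial.coeff_eq_zero_of_natDegree_lt (by omega : L.natDegree < k),
          Polynomial.coeff_eq_zero_of_natDegree_lt (by omega : p.natDegree < k)]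
        ring
    have hroots : ∀ i, (L - Polynomial.C L.leadingCoeff * p).eval (z i) = 0 := by
      intro i
      simp [hzroot i, hpz i]
    have h0 := Polynomial.eq_zero_of_natDegree_lt_card_of_eval_eq_zero
      (L - Polynomial.C L.leadingCoeff * p) hzinj hroots
      (by simpa [Fintype.card_fin] using hdiff)
    rw [sub_eq_zero] at h0
    exact h0
  have hodeL : Dop β N L = 0 := ode_of_orth hN hβ L hLdeg hLorth
  have hode : Dop β N p = 0 := by
    have hexp : Dop β N L = Polynomial.C L.leadingCoeff * Dop β N p := by
      conv_lhs => rw [hLp]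
      unfold Dop Dop0
      rw [Polynomial.derivative_C_mul, Polynomial.derivative_C_mul]
      ring
    rw [hexp] at hodeL
    rcases mul_eq_zero.mp hodeL with h | h
    · exact absurd (Polynomial.C_eq_zero.mp h) hlcne
    · exact h
  -- coefficient recursion
  have hrec : ∀ k : ℕ, ((N:ℝ) - k) * p.coeff k
      + ((k:ℝ)+1) * (((k:ℝ)+1)+β) * p.coeff (k+1) = 0 := by
    intro k
    have h := congrArg (fun q : Polynomial ℝ => q.coeff k) hode
    simpa [Dop_coeff] using h
  -- product of roots
  have hprodz : (∏ i, z i) = ∏ j ∈ Finset.range N, (β + 1 + (j:ℝ)) := by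
    have claim : ∀ j : ℕ, j ≤ N → (j.factorial : ℝ) * p.coeff (N - j)
        = (-1)^j * ∏ m ∈ Finset.Ico (N-j) N, ((((m:ℕ):ℝ))+1) * ((((m:ℕ):ℝ))+1+β) := by
      intro j
      induction j with
      | zero => intro _; simp [hpcoeffN]
      | succ j ih =>
        intro hj1
        have ihh := ih (by omega)
        have hk : N - (j+1) + 1 = N - j := by omega
        have hr := hrec (N - (j+1))
        rw [hk] at hr
        have hNk : ((N:ℝ) - ((N - (j+1) : ℕ):ℝ)) = (j:ℝ)+1 := by
          rw [Nat.cast_sub hj1]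
          push_cast
          ring
        rw [hNk] at hr
        have hIco : ∏ m ∈ Finset.Ico (N-(j+1)) N, ((((m:ℕ):ℝ))+1) * ((((m:ℕ):ℝ))+1+β)
            = ((((N-(j+1):ℕ):ℝ))+1) * ((((N-(j+1):ℕ):ℝ))+1+β)
              * ∏ m ∈ Finset.Ico (N-j) N, ((((m:ℕ):ℝ))+1) * ((((m:ℕ):ℝ))+1+β) := by
          rw [← hk]
          exact Finset.prod_eq_prod_Ico_succ_bot (by omega) _
        rw [hIco]
        have hfac : ((j+1).factorial : ℝ) = ((j:ℝ)+1) * (j.factorial : ℝ) := by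
          rw [Nat.factorial_succ]
          push_cast
          ring
        rw [hfac, pow_succ]
        linear_combination ((j.factorial : ℝ)) * hr
          - ((((N-(j+1):ℕ):ℝ))+1) * ((((N-(j+1):ℕ):ℝ))+1+β) * ihh
    have h0 := claim N le_rfl
    rw [Nat.sub_self] at h0
    rw [show Finset.Ico 0 N = Finset.range N from by
      rw [Finset.range_eq_Ico], Finset.prod_mul_distrib] at h0
    have hfacprod : ∏ m ∈ Finset.range N, (((m:ℕ):ℝ)+1) = (N.factorial : ℝ) := by
      exact_mod_cast congrArg (Nat.cast : ℕ → ℝ)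
        (Finset.prod_range_add_one_eq_factorial N)
    rw [hfacprod] at h0
    have hc0 : p.coeff 0 = (-1:ℝ)^N * ∏ i, z i := by
      rw [Polynomial.coeff_zero_eq_eval_zero, hp, eval_prod_XC]
      rw [show (fun l : Fin N => (0:ℝ) - z l) = fun l => (-1) * z l from funext fun l => by ring]
      rw [Finset.prod_mul_distrib, Finset.prod_const]
      simp [Fintype.card_fin]
    rw [hc0] at h0
    have hreorder : ∏ m ∈ Finset.range N, (((m:ℕ):ℝ)+1+β)
        = ∏ j ∈ Finset.range N, (β + 1 + (j:ℝ)) :=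
      Finset.prod_congr rfl fun m _ => by ring
    have hne : (N.factorial : ℝ) * (-1:ℝ)^N ≠ 0 :=
      mul_ne_zero (Nat.cast_ne_zero.mpr (Nat.factorial_ne_zero N))
        (pow_ne_zero _ (by norm_num))
    have hsub : (N.factorial : ℝ) * (-1:ℝ)^N
        * ((∏ i, z i) - ∏ j ∈ Finset.range N, (β + 1 + (j:ℝ))) = 0 := by
      linear_combination h0 + (N.factorial : ℝ) * (-1:ℝ)^N * hreorder
    rcases mul_eq_zero.mp hsub with h | h
    · exact absurd h hne
    · linarith [sub_eq_zero.mp h]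
    -- degree of pie
  have hπdeg : ∀ i, (pie z i).natDegree < N := by
    intro i
    rw [pie, Polynomial.natDegree_prod _ _ fun l _ => Polynomial.X_sub_C_ne_zero (z l)]
    simp only [Polynomial.natDegree_X_sub_C, Finset.sum_const, smul_eq_mul, mul_one]
    rw [Finset.card_erase_of_mem (Finset.mem_univ i)]
    simp only [Finset.card_univ, Fintype.card_fin]
    omega
  set A : Fin N → ℝ := fun j => (pie z j).eval (z j) with hA
  have hAne : ∀ j, A j ≠ 0 := fun j => pie_eval_self_ne_zero hzinj j
  set M : Matrix (Fin N) (Fin N) ℝ :=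
    Matrix.of (fun j i => (Dop β N (pie z i)).eval (z j)) with hM
  set V : Matrix (Fin N) (Fin N) ℝ := Matrix.of (fun j k => z j ^ (k:ℕ)) with hV
  set T : Matrix (Fin N) (Fin N) ℝ := Matrix.of (fun k m =>
    if (k:ℕ) = (m:ℕ) then (N:ℝ) - (k:ℕ)
    else if (k:ℕ)+1 = (m:ℕ) then ((m:ℕ):ℝ)*(((m:ℕ):ℝ)+β) else 0) with hT
  set P : Matrix (Fin N) (Fin N) ℝ := Matrix.of (fun k i => (pie z i).coeff (k:ℕ)) with hP
  have hTP : ∀ (k i : Fin N), (T * P) k i = (Dop β N (pie z i)).coeff (k:ℕ) := by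
    intro k i
    rw [Matrix.mul_apply, Dop_coeff]
    have hsplit : ∀ m : Fin N, T k m * P m i
        = (if m = k then ((N:ℝ) - (k:ℕ)) * (pie z i).coeff (k:ℕ) else 0)
          + (if (m:ℕ) = (k:ℕ)+1 then
              (((k:ℕ):ℝ)+1) * ((((k:ℕ):ℝ)+1)+β) * (pie z i).coeff ((k:ℕ)+1) else 0) := by
      intro m
      simp only [hT, hP, Matrix.of_apply]
      by_cases h1 : (k:ℕ) = (m:ℕ)
      · have hmk : m = k := Fin.ext h1.symm
        subst hmk
        have h2 : ¬((m:ℕ) = (m:ℕ)+1) := by omega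
        simp [h2]
      · have hmk : ¬(m = k) := fun h => h1 (by rw [h])
        by_cases h2 : (k:ℕ)+1 = (m:ℕ)
        · rw [if_neg h1, if_pos h2, if_neg hmk, if_pos h2.symm, zero_add]
          rw [← h2]
          push_cast
          ring
        · have h2' : ¬((m:ℕ) = (k:ℕ)+1) := fun h => h2 h.symm
          simp [h1, h2, hmk, h2']
    rw [Finset.sum_congr rfl fun m _ => hsplit m, Finset.sum_add_distrib]
    congr 1
    · rw [Finset.sum_ite_eq' Finset.univ k]
      simp
    · by_cases hk1 : (k:ℕ)+1 < N
      · have hcond : ∀ m : Fin N, ((m:ℕ) = (k:ℕ)+1) ↔ (m = (⟨(k:ℕ)+1, hk1⟩ : Fin N)) := by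
          intro m
          rw [Fin.ext_iff]
        rw [Finset.sum_congr rfl fun m _ => by rw [if_congr (hcond m) rfl rfl]]
        rw [Finset.sum_ite_eq' Finset.univ]
        simp
      · have hcoeff : (pie z i).coeff ((k:ℕ)+1) = 0 :=
          Polynomial.coeff_eq_zero_of_natDegree_lt (by have := hπdeg i; omega)
        rw [hcoeff, mul_zero, Finset.sum_eq_zero]
        intro m _
        have hm : ¬((m:ℕ) = (k:ℕ)+1) := by
          have := m.isLt
          omega
        simp [hm]
  have hMfact : M = V * (T * P) := by
    ext j i
    rw [Matrix.mul_apply]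
    rw [Finset.sum_congr rfl fun k _ => by rw [hTP k i]]
    have hev := Polynomial.eval_eq_sum_range'
      (Dop_natDegree_lt (β := β) hN (le_of_lt (hπdeg i))) (z j)
    simp only [hM, hV, Matrix.of_apply]
    rw [hev, ← Fin.sum_univ_eq_sum_range (fun k => (Dop β N (pie z i)).coeff k * z j ^ k) N]
    exact Finset.sum_congr rfl fun k _ => by ring
  have hVP : V * P = Matrix.diagonal A := by
    ext j i
    rw [Matrix.mul_apply]
    have hev := Polynomial.eval_eq_sum_range' (hπdeg i) (z j)
    have hsum : ∑ k : Fin N, V j k * P k i = (pie z i).eval (z j) := by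
      simp only [hV, hP, Matrix.of_apply]
      rw [hev, ← Fin.sum_univ_eq_sum_range (fun k => (pie z i).coeff k * z j ^ k) N]
      exact Finset.sum_congr rfl fun k _ => by ring
    rw [hsum]
    by_cases hij : j = i
    · subst hij
      rw [Matrix.diagonal_apply_eq]
    · rw [Matrix.diagonal_apply_ne _ hij]
      exact pie_eval_ne (fun h => hij h.symm)
  have hπcoeffzero : True := trivial
  have hTdet : T.det = (N.factorial : ℝ) := by
    have htri : T.BlockTriangular id := by
      intro i j' hij'
      have hlt : (j':ℕ) < (i:ℕ) := hij'
      simp only [hT, Matrix.of_apply]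
      rw [if_neg (by omega), if_neg (by omega)]
    rw [Matrix.det_of_upperTriangular htri]
    have hdiag : ∀ i : Fin N, T i i = (N:ℝ) - (i:ℕ) := by
      intro i
      simp [hT]
    rw [Finset.prod_congr rfl fun i _ => hdiag i]
    rw [Fin.prod_univ_eq_prod_range (fun k => (N:ℝ) - k) N]
    have hrefl : ∏ k ∈ Finset.range N, ((N:ℝ) - (k:ℕ))
        = ∏ k ∈ Finset.range N, (((k:ℕ):ℝ)+1) := by
      rw [← Finset.prod_range_reflect]
      refine Finset.prod_congr rfl fun j' hj' => ?_
      have h1 : j' < N := Finset.mem_range.mp hj'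
      have h2 : (N - 1 - j' : ℕ) = N - (j'+1) := by omega
      rw [h2, Nat.cast_sub (by omega : j'+1 ≤ N)]
      push_cast
      ring
    rw [hrefl]
    exact_mod_cast congrArg (Nat.cast : ℕ → ℝ) (Finset.prod_range_add_one_eq_factorial N)
  have hSM : S = Matrix.diagonal (fun j => (z j * A j)⁻¹) * M := by
    ext j i
    rw [Matrix.diagonal_mul, hS]
    by_cases hij : j = i
    · subst hij
      simp only [Matrix.of_apply, eq_self_iff_true, if_true, hM]
      rw [entry_diag hzinj hzpos hode j]
      rw [show z j * (pie z j).eval (z j) = z j * A j from rfl]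
      rw [mul_comm ((β + 1) / z j ^ 2
        + 2 * ∑ l ∈ Finset.univ.erase j, 1 / (z j - z l) ^ 2) (z j * A j)]
      rw [inv_mul_cancel_left₀ (mul_ne_zero (ne_of_gt (hzpos j)) (hAne j))]
    · simp only [Matrix.of_apply, if_neg hij, hM]
      have hoff := entry_offdiag hzinj hode (show i ≠ j from fun h => hij h.symm)
      rw [show (pie z j).eval (z j) = A j from rfl] at hoff
      have hne' : (z j - z i) ≠ 0 :=
        sub_ne_zero.mpr fun h => hij (hzinj h)
      have hne2 : (z j * A j) ≠ 0 := mul_ne_zero (ne_of_gt (hzpos j)) (hAne j)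
      rw [inv_mul_eq_div, div_eq_div_iff (pow_ne_zero _ hne') hne2]
      linear_combination -hoff
  have hdetS : S.det = (N.factorial : ℝ) / ∏ i, z i := by
    have h1 : M.det = T.det * (V * P).det := by
      rw [hMfact, Matrix.det_mul, Matrix.det_mul, Matrix.det_mul]
      ring
    rw [hSM, Matrix.det_mul, Matrix.det_diagonal, h1, hVP, Matrix.det_diagonal, hTdet]
    rw [show ∏ j, (z j * A j)⁻¹ = (∏ j, (z j * A j))⁻¹ from by
      rw [← Finset.prod_inv_distrib], Finset.prod_mul_distrib]
    have hzprod : (∏ j, z j) ≠ 0 := Finset.prod_ne_zero_iff.mpr fun j _ => ne_of_gt (hzpos j)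
    have hAprod : (∏ j, A j) ≠ 0 := Finset.prod_ne_zero_iff.mpr fun j _ => hAne j
    field_simp
  rw [hdetS, hprodz]
end
end
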